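/- arXiv:1202.4853 — 2 statements merged into one kernel-verified Lean document; each statement's English description precedes it below -/
import Mathlib

section
/- Let ν be real with |ν| ≥ 1/2 and set μ = ν² − 1/4 ≥ 0. Then for all x > 0 the logarithmic derivative of the modified Bessel function of the second kind satisfies x · K_ν′(x)/K_ν(x) ≤ −√(x² + μ) + √μ − |ν|, where K_ν′ denotes the derivative of K_ν with respect to x. -/
open Real

/-- The modified Bessel function of the first kind of real order `ν`,
`I_ν(x) = ∑_{n≥0} (x/2)^(2n+ν) / (n! Γ(n+ν+1))`. -/
noncomputable def besselI (ν x : ℝ) : ℝ :=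
  ∑' n : ℕ, (x / 2) ^ (2 * (n : ℝ) + ν) / ((n.factorial : ℝ) * Real.Gamma ((n : ℝ) + ν + 1))

/-- The modified Bessel function of the second kind of real order `ν`,
`K_ν(x) = ∫_0^∞ e^{-x cosh t} cosh(ν t) dt`. -/
noncomputable def besselK (ν x : ℝ) : ℝ :=
  ∫ t in Set.Ioi (0 : ℝ), Real.exp (-x * Real.cosh t) * Real.cosh (ν * t)

namespace BesselAux
open MeasureTheory Set Filter



lemma sq_le_four_exp {z : ℝ} (hz : 0 ≤ z) : z ^ 2 ≤ 4 * exp z := by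
  have e1 : z / 2 + 1 ≤ exp (z / 2) := by linarith [Real.add_one_le_exp (z / 2)]
  have e2 : exp z = exp (z / 2) * exp (z / 2) := by rw [← Real.exp_add]; ring_nf
  nlinarith [Real.exp_pos (z / 2)]

lemma exp_abs_le_two_cosh (t : ℝ) : exp |t| ≤ 2 * cosh t := by
  rw [← Real.cosh_abs, Real.cosh_eq]
  have := Real.exp_pos (-|t|); linarith

lemma cosh_le_exp_abs (t : ℝ) : cosh t ≤ exp |t| := by
  rw [← Real.cosh_abs, Real.cosh_eq]
  have h : exp (-|t|) ≤ exp |t| := Real.exp_le_exp.2 (by linarith [abs_nonneg t])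
  linarith

lemma abs_cosh_le (y : ℝ) : |cosh y| ≤ exp |y| := by
  rw [abs_of_pos (Real.cosh_pos y)]; exact cosh_le_exp_abs y

lemma abs_sinh_le (y : ℝ) : |sinh y| ≤ exp |y| := by
  have h1 : |sinh y| = sinh |y| := Real.abs_sinh y
  have h2 : sinh |y| ≤ cosh |y| := by
    rw [Real.sinh_eq, Real.cosh_eq]
    have := Real.exp_pos (-|y|); linarith
  rw [h1]
  refine h2.trans ((cosh_le_exp_abs |y|).trans ?_)
  rw [abs_abs]

lemma master_bound (c ε a : ℝ) (hc : 0 < c) (hε : 0 < ε) :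
    ∃ C : ℝ, ∀ t : ℝ, -(c * cosh (ε * t)) + a * |t| ≤ C - |t| := by
  refine ⟨16 * (|a| + 1) ^ 2 / (c * ε ^ 2 * 8), fun t => ?_⟩
  have h1 : exp |ε * t| ≤ 2 * cosh (ε * t) := exp_abs_le_two_cosh _
  have h2 : |ε * t| ^ 2 ≤ 4 * exp |ε * t| := sq_le_four_exp (abs_nonneg _)
  have h3 : a * |t| ≤ |a| * |t| := mul_le_mul_of_nonneg_right (le_abs_self a) (abs_nonneg t)
  have h4 : (0:ℝ) ≤ |t| := abs_nonneg t
  have h5 : |ε * t| = ε * |t| := by rw [abs_mul, abs_of_pos hε]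
  have h12 : ε ^ 2 * |t| ^ 2 ≤ 8 * cosh (ε * t) := by
    have h6 : |ε * t| ^ 2 ≤ 8 * cosh (ε * t) := by linarith
    calc ε ^ 2 * |t| ^ 2 = |ε * t| ^ 2 := by rw [h5]; ring
    _ ≤ _ := h6
  have hq : -(c * cosh (ε * t)) + a * |t| + |t| ≤ 16 * (|a| + 1) ^ 2 / (c * ε ^ 2 * 8) := by
    rw [le_div_iff₀ (by positivity)]
    have f1 : c ^ 2 * ε ^ 2 * (ε ^ 2 * |t| ^ 2) ≤ c ^ 2 * ε ^ 2 * (8 * cosh (ε * t)) :=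
      mul_le_mul_of_nonneg_left h12 (by positivity)
    have h8 : a * |t| + |t| ≤ (|a| + 1) * |t| := by nlinarith
    have f2 : (a * |t| + |t|) * (c * ε ^ 2 * 8) ≤ ((|a| + 1) * |t|) * (c * ε ^ 2 * 8) :=
      mul_le_mul_of_nonneg_right h8 (by positivity)
    nlinarith [f1, f2, sq_nonneg (c * ε ^ 2 * |t| - 4 * (|a| + 1))]
  linarith

lemma integrable_exp_neg_abs : Integrable (fun t : ℝ => exp (-|t|)) := by
  have h1 : IntegrableOn (fun t : ℝ => exp (-|t|)) (Ioi 0) := by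
    apply (exp_neg_integrableOn_Ioi 0 one_pos).congr_fun ?_ measurableSet_Ioi
    intro t ht; simp [abs_of_pos (mem_Ioi.1 ht), neg_mul]
  have h2 : IntegrableOn (fun t : ℝ => exp (-|t|)) (Iic 0) := by
    rw [← Measure.map_neg_eq_self (volume : Measure ℝ)]
    have m : MeasurableEmbedding fun x : ℝ => -x :=
      (Homeomorph.neg ℝ).measurableEmbedding
    rw [m.integrableOn_map_iff]
    simp only [Function.comp_def, abs_neg, neg_preimage, neg_Iic, neg_zero]
    exact Iff.mpr integrableOn_Ici_iff_integrableOn_Ioi h1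
  have h3 := h2.union h1
  simpa [Iic_union_Ioi] using h3

lemma integrable_of_cosh_bound {f : ℝ → ℝ} (hf : AEStronglyMeasurable f volume)
    (c ε a M : ℝ) (hc : 0 < c) (hε : 0 < ε) (hM : 0 ≤ M)
    (hb : ∀ t, |f t| ≤ M * exp (-(c * cosh (ε * t)) + a * |t|)) : Integrable f := by
  obtain ⟨C, hC⟩ := master_bound c ε a hc hε
  have hint : Integrable (fun t : ℝ => M * exp C * exp (-|t|)) :=
    integrable_exp_neg_abs.const_mul _
  apply hint.mono' hf
  refine ae_of_all _ fun t => ?_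
  rw [Real.norm_eq_abs]
  have h1 : exp (-(c * cosh (ε * t)) + a * |t|) ≤ exp C * exp (-|t|) := by
    rw [← Real.exp_add]
    exact Real.exp_le_exp.2 (by linarith [hC t])
  calc |f t| ≤ M * exp (-(c * cosh (ε * t)) + a * |t|) := hb t
  _ ≤ M * (exp C * exp (-|t|)) := mul_le_mul_of_nonneg_left h1 hM
  _ = M * exp C * exp (-|t|) := by ring



lemma integrable_exp_cosh_mul (c ε : ℝ) (hc : 0 < c) (hε : 0 < ε) {g : ℝ → ℝ}
    (hg : Continuous g) (a M : ℝ) (hM : 0 ≤ M) (hgb : ∀ t, |g t| ≤ M * exp (a * |t| )) :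
    Integrable (fun t => exp (-(c * cosh (ε * t))) * g t) := by
  have hcont : Continuous fun t => exp (-(c * cosh (ε * t))) * g t := by
    fun_prop
  apply integrable_of_cosh_bound hcont.aestronglyMeasurable c ε a M hc hε hM
  intro t
  rw [abs_mul, abs_of_pos (exp_pos _), Real.exp_add]
  calc exp (-(c * cosh (ε * t))) * |g t| ≤ exp (-(c * cosh (ε * t))) * (M * exp (a * |t| )) :=
        mul_le_mul_of_nonneg_left (hgb t) (exp_pos _).le
  _ = M * (exp (-(c * cosh (ε * t))) * exp (a * |t| )) := by ring

lemma integrable_exp_cosh_one_mul (c : ℝ) (hc : 0 < c) {g : ℝ → ℝ}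
    (hg : Continuous g) (a M : ℝ) (hM : 0 ≤ M) (hgb : ∀ t, |g t| ≤ M * exp (a * |t| )) :
    Integrable (fun t => exp (-(c * cosh t)) * g t) := by
  have h := integrable_exp_cosh_mul c 1 hc one_pos hg a M hM hgb
  simpa using h

lemma integrable_exp_cosh_half_mul (c : ℝ) (hc : 0 < c) {g : ℝ → ℝ}
    (hg : Continuous g) (a M : ℝ) (hM : 0 ≤ M) (hgb : ∀ t, |g t| ≤ M * exp (a * |t| )) :
    Integrable (fun t => exp (-(c * cosh (t / 2))) * g t) := by
  have h := integrable_exp_cosh_mul c (1/2) hc one_half_pos hg a M hM hgb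
  have h2 : ∀ t : ℝ, (1/2 : ℝ) * t = t / 2 := fun t => by ring
  simp_rw [h2] at h; exact h

lemma bound_cosh (a : ℝ) : ∀ t : ℝ, |cosh (a * t)| ≤ 1 * exp (|a| * |t| ) := by
  intro t
  calc |cosh (a*t)| ≤ exp |a*t| := abs_cosh_le _
  _ = 1 * exp (|a| * |t| ) := by rw [abs_mul, one_mul]

lemma bound_cosh_cosh (a : ℝ) : ∀ t : ℝ, |cosh t * cosh (a * t)| ≤ 1 * exp ((1 + |a|) * |t| ) := by
  intro t
  rw [abs_mul, one_mul]
  calc |cosh t| * |cosh (a*t)| ≤ exp |t| * exp |a*t| :=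
        mul_le_mul (abs_cosh_le _) (abs_cosh_le _) (abs_nonneg _) (exp_pos _).le
  _ = exp ((1 + |a|) * |t| ) := by rw [← Real.exp_add, abs_mul]; ring_nf

lemma abs_cosh_le' (y : ℝ) : |cosh y| ≤ exp |y| := abs_cosh_le y

lemma bound_ibp (c γ β : ℝ) (hc : 0 < c) (hγ : 0 < γ) :
    ∀ t : ℝ, |β * cosh (β * t) - c * γ * sinh (γ * t) * sinh (β * t)|
      ≤ (|β| + c * γ) * exp ((γ + |β|) * |t| ) := by
  intro t
  have h1 : |β * cosh (β*t)| ≤ |β| * exp (|β| * |t| ) := by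
    rw [abs_mul]
    exact mul_le_mul_of_nonneg_left (by simpa [abs_mul] using abs_cosh_le (β*t)) (abs_nonneg β)
  have h2 : |c * γ * sinh (γ*t) * sinh (β*t)| ≤ c * γ * (exp (γ * |t| ) * exp (|β| * |t| )) := by
    rw [abs_mul, abs_mul, abs_mul, abs_of_pos hc, abs_of_pos hγ]
    have := mul_le_mul (abs_sinh_le (γ*t)) (abs_sinh_le (β*t)) (abs_nonneg _) (exp_pos _).le
    rw [abs_mul, abs_mul, abs_of_pos hγ] at this
    calc c * γ * |sinh (γ*t)| * |sinh (β*t)| = c * γ * (|sinh (γ*t)| * |sinh (β*t)|) := by ring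
    _ ≤ c * γ * (exp (γ * |t| ) * exp (|β| * |t| )) := by
        apply mul_le_mul_of_nonneg_left _ (by positivity)
        exact this
  have h3 : exp (|β| * |t| ) ≤ exp (γ * |t| ) * exp (|β| * |t| ) := by
    nlinarith [exp_pos (|β| * |t| ), Real.one_le_exp (by positivity : (0:ℝ) ≤ γ * |t| )]
  calc |β * cosh (β*t) - c * γ * sinh (γ*t) * sinh (β*t)|
      ≤ |β * cosh (β*t)| + |c * γ * sinh (γ*t) * sinh (β*t)| := abs_sub _ _
  _ ≤ |β| * (exp (γ * |t| ) * exp (|β| * |t| )) + c * γ * (exp (γ * |t| ) * exp (|β| * |t| )) := by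
      have := mul_le_mul_of_nonneg_left h3 (abs_nonneg β)
      nlinarith [h1, h2, exp_pos (|β| * |t| )]
  _ = (|β| + c * γ) * exp ((γ + |β|) * |t| ) := by rw [← Real.exp_add]; ring_nf



lemma besselK_eq (a x : ℝ) : besselK a x = ∫ t in Ioi (0:ℝ), exp (-(x * cosh t)) * cosh (a * t) := by
  rw [besselK]; simp_rw [neg_mul]

lemma integrable_besselK_kernel (a x : ℝ) (hx : 0 < x) :
    Integrable (fun t => exp (-(x * cosh t)) * cosh (a * t)) :=
  integrable_exp_cosh_one_mul x hx (by fun_prop) |a| 1 one_pos.le (bound_cosh a)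

lemma besselK_pos (a x : ℝ) (hx : 0 < x) : 0 < besselK a x := by
  rw [besselK_eq]
  have hint : IntegrableOn (fun t => exp (-(x * cosh t)) * cosh (a * t)) (Ioi 0) :=
    (integrable_besselK_kernel a x hx).integrableOn
  refine (setIntegral_pos_iff_support_of_nonneg_ae ?_ hint).2 ?_
  · filter_upwards with t
    positivity
  · refine lt_of_lt_of_le ?_ (measure_mono (fun t ht =>
      ⟨Function.mem_support.2 (ne_of_gt (by positivity)), ht⟩))
    rw [Real.volume_Ioi]
    exact ENNReal.zero_lt_top

lemma besselK_even (ν : ℝ) : besselK ν = besselK |ν| := by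
  funext x
  rw [besselK, besselK]
  apply setIntegral_congr_fun measurableSet_Ioi
  intro t _
  simp only
  congr 1
  rw [← Real.cosh_abs (ν * t), ← Real.cosh_abs (|ν| * t), abs_mul, abs_mul, abs_abs]

/-- General integration by parts identity. -/
lemma ibp (c γ β a₀ : ℝ) (hc : 0 < c) (hγ : 0 < γ) :
    ∫ u in Ioi a₀, exp (-(c * cosh (γ * u))) * (β * cosh (β * u) - c * γ * sinh (γ * u) * sinh (β * u))
      = -(exp (-(c * cosh (γ * a₀))) * sinh (β * a₀)) := by
  have hderiv : ∀ u : ℝ, HasDerivAt (fun w => exp (-(c * cosh (γ * w))) * sinh (β * w))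
      (exp (-(c * cosh (γ * u))) * (β * cosh (β * u) - c * γ * sinh (γ * u) * sinh (β * u))) u := by
    intro u
    have h1 : HasDerivAt (fun w : ℝ => γ * w) γ u := by
      simpa using (hasDerivAt_id u).const_mul γ
    have h2 : HasDerivAt (fun w => -(c * cosh (γ * w))) (-(c * (sinh (γ * u) * γ))) u :=
      ((h1.cosh).const_mul c).neg
    have h3 : HasDerivAt (fun w => exp (-(c * cosh (γ * w))))
        (exp (-(c * cosh (γ * u))) * -(c * (sinh (γ * u) * γ))) u := h2.exp
    have h4 : HasDerivAt (fun w : ℝ => β * w) β u := by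
      simpa using (hasDerivAt_id u).const_mul β
    have h5 : HasDerivAt (fun w => sinh (β * w)) (cosh (β * u) * β) u := h4.sinh
    have := h3.mul h5
    exact this.congr_deriv (by ring)
  have hcont : ContinuousWithinAt (fun w => exp (-(c * cosh (γ * w))) * sinh (β * w)) (Ici a₀) a₀ :=
    (Continuous.continuousWithinAt (by fun_prop))
  have hint : IntegrableOn (fun u => exp (-(c * cosh (γ * u))) *
      (β * cosh (β * u) - c * γ * sinh (γ * u) * sinh (β * u))) (Ioi a₀) := by
    exact (integrable_exp_cosh_mul c γ hc hγ (by fun_prop) (γ + |β|) (|β| + c * γ)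
      (by positivity) (bound_ibp c γ β hc hγ)).integrableOn
  have htend : Tendsto (fun w => exp (-(c * cosh (γ * w))) * sinh (β * w)) atTop (nhds 0) := by
    obtain ⟨C, hC⟩ := master_bound c γ |β| hc hγ
    have hg : Tendsto (fun w : ℝ => exp C * exp (-w)) atTop (nhds 0) := by
      have h0 : Tendsto (fun w : ℝ => exp (-w)) atTop (nhds 0) := by
        simpa [Function.comp_def] using Real.tendsto_exp_atBot.comp tendsto_neg_atTop_atBot
      simpa using h0.const_mul (exp C)
    apply squeeze_zero_norm' ?_ hg
    filter_upwards [eventually_ge_atTop (0:ℝ)] with w hw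
    rw [Real.norm_eq_abs, abs_mul, abs_of_pos (exp_pos _)]
    have h1 : |sinh (β * w)| ≤ exp (|β| * |w| ) := by
      have := abs_sinh_le (β * w); rwa [abs_mul] at this
    have h2 : exp (-(c * cosh (γ * w))) * |sinh (β * w)| ≤
        exp (-(c * cosh (γ * w)) + |β| * |w| ) := by
      rw [Real.exp_add]
      exact mul_le_mul_of_nonneg_left h1 (exp_pos _).le
    refine h2.trans ?_
    have h3 := hC w
    calc exp (-(c * cosh (γ * w)) + |β| * |w| ) ≤ exp (C - |w| ) := Real.exp_le_exp.2 h3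
    _ = exp C * exp (-w) := by rw [abs_of_nonneg hw, Real.exp_sub, Real.exp_neg]; ring
  have := integral_Ioi_of_hasDerivAt_of_tendsto hcont (fun u _ => hderiv u) hint htend
  rw [this]; ring



lemma hasDerivAt_besselK (a x : ℝ) (hx : 0 < x) :
    HasDerivAt (besselK a) (-∫ t in Ioi (0:ℝ), exp (-(x * cosh t)) * (cosh t * cosh (a * t))) x := by
  have hmain := hasDerivAt_integral_of_dominated_loc_of_deriv_le
    (μ := volume.restrict (Ioi (0:ℝ))) (𝕜 := ℝ)
    (F := fun y t => exp (-(y * cosh t)) * cosh (a * t))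
    (F' := fun y t => -(exp (-(y * cosh t)) * (cosh t * cosh (a * t))))
    (x₀ := x) (bound := fun t => exp (-(x/2 * cosh t)) * (cosh t * cosh (a * t)))
    (s := Metric.ball x (x/2)) (Metric.ball_mem_nhds x (by positivity))
    ?_ ?_ ?_ ?_ ?_ ?_
  · rcases hmain with ⟨_, h⟩
    have heq : (fun y => ∫ t in Ioi (0:ℝ), exp (-(y * cosh t)) * cosh (a * t)) = besselK a := by
      funext y; rw [besselK_eq]
    rw [heq] at h
    rw [integral_neg] at h
    exact h
  · filter_upwards with y
    exact (Continuous.aestronglyMeasurable (by fun_prop)).restrict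
  · exact (integrable_besselK_kernel a x hx).integrableOn
  · exact (Continuous.aestronglyMeasurable (by fun_prop)).restrict
  · filter_upwards with t
    intro y hy
    have hy2 : x/2 ≤ y := by
      have := abs_lt.1 (mem_ball_iff_norm.1 hy)
      linarith [(abs_lt.1 (by simpa [Real.norm_eq_abs] using mem_ball_iff_norm.1 hy)).1]
    rw [Real.norm_eq_abs, abs_neg, abs_mul, abs_of_pos (exp_pos _)]
    have h1 : exp (-(y * cosh t)) ≤ exp (-(x/2 * cosh t)) := by
      apply Real.exp_le_exp.2
      have := Real.cosh_pos t
      nlinarith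
    have h2 : |cosh t * cosh (a * t)| = cosh t * cosh (a * t) := by
      rw [abs_of_pos (by positivity)]
    rw [h2]
    exact mul_le_mul_of_nonneg_right h1 (by positivity)
  · apply Integrable.integrableOn
    exact integrable_exp_cosh_one_mul (x/2) (by positivity) (by fun_prop) (1 + |a|) 1
      one_pos.le (bound_cosh_cosh a)
  · filter_upwards with t
    intro y hy
    have h1 : HasDerivAt (fun w : ℝ => -(w * cosh t)) (-cosh t) y := by
      exact ((hasDerivAt_id y).mul_const (cosh t)).neg.congr_deriv (by simp)
    have h2 := (h1.exp).mul_const (cosh (a * t))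
    exact h2.congr_deriv (by ring)

lemma deriv_besselK (m x : ℝ) (hx : 0 < x) :
    deriv (besselK m) x = -besselK (m-1) x - m / x * besselK m x := by
  have hD := (hasDerivAt_besselK m x hx).deriv
  rw [hD]
  have hsplit : ∀ t : ℝ, exp (-(x * cosh t)) * (cosh t * cosh (m * t)) =
      exp (-(x * cosh t)) * cosh ((m-1) * t)
        + (-(1/x)) * (exp (-(x * cosh t)) * (m * cosh (m * t) - x * sinh t * sinh (m * t)))
        + (m/x) * (exp (-(x * cosh t)) * cosh (m * t)) := by
    intro t
    have hid : cosh t * cosh (m * t) = cosh ((m-1)*t) + sinh t * sinh (m * t) := by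
      rw [show (m-1)*t = m*t - t by ring, Real.cosh_sub]
      ring
    field_simp
    rw [mul_assoc, hid, show t * (m-1) = (m-1)*t by ring]
    ring
  have hI1 : Integrable (fun t => exp (-(x * cosh t)) * cosh ((m-1) * t)) :=
    integrable_besselK_kernel (m-1) x hx
  have hgb : ∀ t : ℝ, |m * cosh (m * t) - x * sinh t * sinh (m * t)|
      ≤ (|m| + x * 1) * exp ((1 + |m|) * |t| ) := by
    intro t
    have := bound_ibp x 1 m hx one_pos t
    simpa using this
  have hI2 : Integrable (fun t => (-(1/x)) * (exp (-(x * cosh t)) *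
      (m * cosh (m * t) - x * sinh t * sinh (m * t)))) := by
    exact (integrable_exp_cosh_one_mul x hx (by fun_prop) (1 + |m|) (|m| + x * 1)
      (by positivity) hgb).const_mul _
  have hI3 : Integrable (fun t => (m/x) * (exp (-(x * cosh t)) * cosh (m * t))) :=
    (integrable_besselK_kernel m x hx).const_mul _
  calc -∫ t in Ioi (0:ℝ), exp (-(x * cosh t)) * (cosh t * cosh (m * t))
      = -∫ t in Ioi (0:ℝ), (exp (-(x * cosh t)) * cosh ((m-1) * t)
        + (-(1/x)) * (exp (-(x * cosh t)) * (m * cosh (m * t) - x * sinh t * sinh (m * t)))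
        + (m/x) * (exp (-(x * cosh t)) * cosh (m * t))) := by
        congr 1; exact setIntegral_congr_fun measurableSet_Ioi fun t _ => hsplit t
  _ = -((∫ t in Ioi (0:ℝ), exp (-(x * cosh t)) * cosh ((m-1) * t))
        + (-(1/x)) * (∫ t in Ioi (0:ℝ), exp (-(x * cosh t)) * (m * cosh (m * t) - x * sinh t * sinh (m * t)))
        + (m/x) * (∫ t in Ioi (0:ℝ), exp (-(x * cosh t)) * cosh (m * t))) := by
        have hI12 : Integrable (fun t => exp (-(x * cosh t)) * cosh ((m-1) * t)
            + (-(1/x)) * (exp (-(x * cosh t)) * (m * cosh (m * t) - x * sinh t * sinh (m * t)))) :=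
          hI1.add hI2
        rw [integral_add hI12.integrableOn hI3.integrableOn,
          integral_add hI1.integrableOn hI2.integrableOn, integral_const_mul, integral_const_mul]
  _ = -besselK (m-1) x - m / x * besselK m x := by
        have hibp := ibp x 1 m 0 hx one_pos
        simp only [one_mul, mul_one, mul_zero, Real.sinh_zero, neg_zero] at hibp
        rw [hibp, ← besselK_eq, ← besselK_eq]
        ring



lemma integral_odd {f : ℝ → ℝ} (hf : Integrable f) (hodd : ∀ v, f (-v) = - f v) :
    ∫ v, f v = 0 := by
  have h1 : ∫ v in Iic (0:ℝ), f (-v) = ∫ v in Ioi (0:ℝ), f v := by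
    simpa using integral_comp_neg_Iic (0:ℝ) f
  have h2 : ∫ v in Iic (0:ℝ), f (-v) = - ∫ v in Iic (0:ℝ), f v := by
    simp_rw [hodd]
    exact integral_neg f
  have h3 : ∫ v, f v = (∫ v in Iic (0:ℝ), f v) + ∫ v in Ioi (0:ℝ), f v := by
    rw [← setIntegral_union (Iic_disjoint_Ioi le_rfl) measurableSet_Ioi hf.integrableOn
      hf.integrableOn, Iic_union_Ioi, setIntegral_univ]
  linarith [h1, h2, h3]

lemma null_line1 : volume {p : ℝ × ℝ | p.1 = p.2} = 0 := by
  have hφ : {p : ℝ × ℝ | p.1 = p.2}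
      = ↑(LinearMap.ker ((LinearMap.fst ℝ ℝ ℝ) - (LinearMap.snd ℝ ℝ ℝ))) := by
    ext p
    simp [LinearMap.mem_ker, sub_eq_zero]
  rw [hφ]
  apply Measure.addHaar_submodule
  intro h
  have : ((1:ℝ), (0:ℝ)) ∈ LinearMap.ker ((LinearMap.fst ℝ ℝ ℝ) - (LinearMap.snd ℝ ℝ ℝ)) := by
    rw [h]; trivial
  simp [LinearMap.mem_ker] at this

lemma null_line2 : volume {p : ℝ × ℝ | p.1 = -p.2} = 0 := by
  have hφ : {p : ℝ × ℝ | p.1 = -p.2}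
      = ↑(LinearMap.ker ((LinearMap.fst ℝ ℝ ℝ) + (LinearMap.snd ℝ ℝ ℝ))) := by
    ext p
    simp [LinearMap.mem_ker]
    constructor <;> intro h <;> linarith
  rw [hφ]
  apply Measure.addHaar_submodule
  intro h
  have : ((1:ℝ), (0:ℝ)) ∈ LinearMap.ker ((LinearMap.fst ℝ ℝ ℝ) + (LinearMap.snd ℝ ℝ ℝ)) := by
    rw [h]; trivial
  simp [LinearMap.mem_ker] at this



lemma trig_id (x b u v : ℝ) :
    x * (cosh ((b+1/2)*((u+v)/2)) * cosh ((b+1/2)*((u-v)/2))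
         - cosh ((b-1/2)*((u+v)/2)) * cosh ((b-1/2)*((u-v)/2)))
     - b * (cosh ((b+1/2)*((u+v)/2)) * cosh ((b-1/2)*((u-v)/2))
            + cosh ((b-1/2)*((u+v)/2)) * cosh ((b+1/2)*((u-v)/2)))
    = x * (sinh (b*u) * sinh (u/2) + sinh (b*v) * sinh (v/2))
      - b * (cosh (b*u) * cosh (v/2) + cosh (b*v) * cosh (u/2)) := by
  set A := exp (b*u/2) with hA
  set B := exp (b*v/2) with hB
  set P := exp (u/4) with hP
  set Q := exp (v/4) with hQ
  have hA0 : 0 < A := exp_pos _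
  have hB0 : 0 < B := exp_pos _
  have hP0 : 0 < P := exp_pos _
  have hQ0 : 0 < Q := exp_pos _
  have e1 : cosh ((b+1/2)*((u+v)/2)) = (A*(B*(P*Q)) + (A*(B*(P*Q)))⁻¹)/2 := by
    rw [show (b+1/2)*((u+v)/2) = b*u/2 + (b*v/2 + (u/4 + v/4)) by ring,
      Real.cosh_eq, Real.exp_neg, Real.exp_add, Real.exp_add, Real.exp_add]
  have e2 : cosh ((b+1/2)*((u-v)/2)) = (A*(B⁻¹*(P*Q⁻¹)) + (A*(B⁻¹*(P*Q⁻¹)))⁻¹)/2 := by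
    rw [show (b+1/2)*((u-v)/2) = b*u/2 + (-(b*v/2) + (u/4 + -(v/4))) by ring,
      Real.cosh_eq, Real.exp_neg, Real.exp_add, Real.exp_add, Real.exp_add,
      Real.exp_neg, Real.exp_neg]
  have e3 : cosh ((b-1/2)*((u+v)/2)) = (A*(B*(P⁻¹*Q⁻¹)) + (A*(B*(P⁻¹*Q⁻¹)))⁻¹)/2 := by
    rw [show (b-1/2)*((u+v)/2) = b*u/2 + (b*v/2 + (-(u/4) + -(v/4))) by ring,
      Real.cosh_eq, Real.exp_neg, Real.exp_add, Real.exp_add, Real.exp_add,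
      Real.exp_neg, Real.exp_neg]
  have e4 : cosh ((b-1/2)*((u-v)/2)) = (A*(B⁻¹*(P⁻¹*Q)) + (A*(B⁻¹*(P⁻¹*Q)))⁻¹)/2 := by
    rw [show (b-1/2)*((u-v)/2) = b*u/2 + (-(b*v/2) + (-(u/4) + v/4)) by ring,
      Real.cosh_eq, Real.exp_neg, Real.exp_add, Real.exp_add, Real.exp_add,
      Real.exp_neg, Real.exp_neg]
  have e5 : sinh (b*u) = (A*A - (A*A)⁻¹)/2 := by
    rw [show b*u = b*u/2 + b*u/2 by ring, Real.sinh_eq, Real.exp_neg, Real.exp_add]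
  have e6 : sinh (u/2) = (P*P - (P*P)⁻¹)/2 := by
    rw [show u/2 = u/4 + u/4 by ring, Real.sinh_eq, Real.exp_neg, Real.exp_add]
  have e7 : sinh (b*v) = (B*B - (B*B)⁻¹)/2 := by
    rw [show b*v = b*v/2 + b*v/2 by ring, Real.sinh_eq, Real.exp_neg, Real.exp_add]
  have e8 : sinh (v/2) = (Q*Q - (Q*Q)⁻¹)/2 := by
    rw [show v/2 = v/4 + v/4 by ring, Real.sinh_eq, Real.exp_neg, Real.exp_add]
  have e9 : cosh (b*u) = (A*A + (A*A)⁻¹)/2 := by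
    rw [show b*u = b*u/2 + b*u/2 by ring, Real.cosh_eq, Real.exp_neg, Real.exp_add]
  have e10 : cosh (v/2) = (Q*Q + (Q*Q)⁻¹)/2 := by
    rw [show v/2 = v/4 + v/4 by ring, Real.cosh_eq, Real.exp_neg, Real.exp_add]
  have e11 : cosh (b*v) = (B*B + (B*B)⁻¹)/2 := by
    rw [show b*v = b*v/2 + b*v/2 by ring, Real.cosh_eq, Real.exp_neg, Real.exp_add]
  have e12 : cosh (u/2) = (P*P + (P*P)⁻¹)/2 := by
    rw [show u/2 = u/4 + u/4 by ring, Real.cosh_eq, Real.exp_neg, Real.exp_add]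
  rw [e1, e2, e3, e4, e5, e6, e7, e8, e9, e10, e11, e12]
  field_simp
  ring

/-- Kernel identity under the rotation (t,s) = ((u+v)/2, (u-v)/2). -/
lemma kernel_id (x b u v : ℝ) :
    exp (-(x * cosh ((u+v)/2))) * exp (-(x * cosh ((u-v)/2))) *
      (x * (cosh ((b+1/2)*((u+v)/2)) * cosh ((b+1/2)*((u-v)/2))
            - cosh ((b-1/2)*((u+v)/2)) * cosh ((b-1/2)*((u-v)/2)))
       - b * (cosh ((b+1/2)*((u+v)/2)) * cosh ((b-1/2)*((u-v)/2))
              + cosh ((b-1/2)*((u+v)/2)) * cosh ((b+1/2)*((u-v)/2))))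
    = exp (-(2*x*(cosh (v/2) * cosh (u/2)))) *
      (x * (sinh (b*u) * sinh (u/2) + sinh (b*v) * sinh (v/2))
       - b * (cosh (b*u) * cosh (v/2) + cosh (b*v) * cosh (u/2))) := by
  have hexp : exp (-(x * cosh ((u+v)/2))) * exp (-(x * cosh ((u-v)/2)))
      = exp (-(2*x*(cosh (v/2) * cosh (u/2)))) := by
    rw [← Real.exp_add]
    congr 1
    rw [show (u+v)/2 = u/2 + v/2 by ring, show (u-v)/2 = u/2 - v/2 by ring,
      Real.cosh_add, Real.cosh_sub]
    ring
  rw [hexp, trig_id]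



noncomputable def lmap : ℝ × ℝ →L[ℝ] ℝ × ℝ :=
  (2⁻¹ : ℝ) • ((ContinuousLinearMap.snd ℝ ℝ ℝ + ContinuousLinearMap.fst ℝ ℝ ℝ).prod
    (ContinuousLinearMap.snd ℝ ℝ ℝ - ContinuousLinearMap.fst ℝ ℝ ℝ))

lemma lmap_apply (p : ℝ × ℝ) : lmap p = ((p.2 + p.1)/2, (p.2 - p.1)/2) := by
  simp [lmap, ContinuousLinearMap.smul_apply, ContinuousLinearMap.prod_apply, Prod.smul_mk,
    smul_eq_mul]
  constructor <;> ring

lemma lmap_det : |lmap.det| = 1/2 := by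
  have hM : lmap.det = (2⁻¹:ℝ)^2 * LinearMap.det
      (((ContinuousLinearMap.snd ℝ ℝ ℝ + ContinuousLinearMap.fst ℝ ℝ ℝ).prod
        (ContinuousLinearMap.snd ℝ ℝ ℝ - ContinuousLinearMap.fst ℝ ℝ ℝ) :
          ℝ × ℝ →L[ℝ] ℝ × ℝ) : ℝ × ℝ →ₗ[ℝ] ℝ × ℝ) := by
    rw [ContinuousLinearMap.det, lmap]
    rw [ContinuousLinearMap.coe_smul]
    rw [LinearMap.det_smul]
    norm_num
  have hdet2 : LinearMap.det
      (((ContinuousLinearMap.snd ℝ ℝ ℝ + ContinuousLinearMap.fst ℝ ℝ ℝ).prod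
        (ContinuousLinearMap.snd ℝ ℝ ℝ - ContinuousLinearMap.fst ℝ ℝ ℝ) :
          ℝ × ℝ →L[ℝ] ℝ × ℝ) : ℝ × ℝ →ₗ[ℝ] ℝ × ℝ) = 2 := by
    rw [← LinearMap.det_toMatrix (Module.Basis.finTwoProd ℝ), Matrix.det_fin_two]
    simp [LinearMap.toMatrix_apply, Module.Basis.finTwoProd_zero, Module.Basis.finTwoProd_one]
    norm_num
  rw [hM, hdet2]
  norm_num

/-- Change of variables: rotate the quadrant to the wedge. -/
lemma cov (FF : ℝ × ℝ → ℝ) :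
    ∫ p in (Ioi (0:ℝ) ×ˢ Ioi (0:ℝ)), FF p
      = (1/2) * ∫ p in {q : ℝ × ℝ | |q.1| < q.2}, FF ((p.2 + p.1)/2, (p.2 - p.1)/2) := by
  have hA : MeasurableSet {q : ℝ × ℝ | |q.1| < q.2} := by
    apply measurableSet_lt <;> fun_prop
  have himg : lmap '' {q : ℝ × ℝ | |q.1| < q.2} = Ioi (0:ℝ) ×ˢ Ioi (0:ℝ) := by
    ext q
    constructor
    · rintro ⟨p, hp, rfl⟩
      rw [lmap_apply]
      have hp2 : |p.1| < p.2 := hp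
      have h := abs_lt.1 hp2
      constructor
      · simp only [mem_Ioi]; linarith [h.1]
      · simp only [mem_Ioi]; linarith [h.2]
    · intro hq
      have h1 : 0 < q.1 := hq.1
      have h2 : 0 < q.2 := hq.2
      refine ⟨(q.1 - q.2, q.1 + q.2), ?_, ?_⟩
      · simp only [mem_setOf_eq]
        rw [abs_lt]
        constructor <;> linarith
      · rw [lmap_apply, Prod.ext_iff]
        constructor <;> simp <;> ring
  have hinj : Set.InjOn lmap {q : ℝ × ℝ | |q.1| < q.2} := by
    intro p _ q _ h
    rw [lmap_apply, lmap_apply, Prod.ext_iff] at h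
    obtain ⟨h1, h2⟩ := h
    simp only at h1 h2
    ext
    · linarith
    · linarith
  have hfd : ∀ p ∈ {q : ℝ × ℝ | |q.1| < q.2},
      HasFDerivWithinAt lmap lmap {q : ℝ × ℝ | |q.1| < q.2} p :=
    fun p _ => lmap.hasFDerivAt.hasFDerivWithinAt
  have h := integral_image_eq_integral_abs_det_fderiv_smul volume hA hfd hinj FF
  rw [himg] at h
  rw [h]
  simp_rw [lmap_det, lmap_apply, smul_eq_mul]
  rw [← integral_const_mul]



noncomputable def EE (x : ℝ) (p : ℝ × ℝ) : ℝ := exp (-(2*x*(cosh (p.1/2) * cosh (p.2/2))))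
noncomputable def Pa (x b : ℝ) (p : ℝ × ℝ) : ℝ := EE x p * (sinh (b*p.2) * sinh (p.2/2))
noncomputable def Pb (x b : ℝ) (p : ℝ × ℝ) : ℝ := EE x p * (sinh (b*p.1) * sinh (p.1/2))
noncomputable def Pc (x b : ℝ) (p : ℝ × ℝ) : ℝ := EE x p * (cosh (b*p.2) * cosh (p.1/2))
noncomputable def Pd (x b : ℝ) (p : ℝ × ℝ) : ℝ := EE x p * (cosh (b*p.1) * cosh (p.2/2))
noncomputable def H2f (x b : ℝ) (p : ℝ × ℝ) : ℝ := x * Pa x b p - b * Pc x b p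
noncomputable def HHf (x b : ℝ) (p : ℝ × ℝ) : ℝ :=
  x * Pa x b p + x * Pb x b p - (b * Pc x b p + b * Pd x b p)
def SS : Set (ℝ × ℝ) := {p | 0 < p.1 + p.2}

lemma SS_meas : MeasurableSet SS := by
  have : SS = {p : ℝ × ℝ | 0 < p.1 + p.2} := rfl
  rw [this]
  apply measurableSet_lt <;> fun_prop

lemma EE_cont (x : ℝ) : Continuous (EE x) := by unfold EE; fun_prop

lemma EE_swap (x : ℝ) (p : ℝ × ℝ) : EE x p.swap = EE x p := by
  unfold EE
  congr 1
  simp only [Prod.fst_swap, Prod.snd_swap]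
  ring

lemma EE_le (x : ℝ) (hx : 0 < x) (p : ℝ × ℝ) :
    EE x p ≤ exp (-(x * cosh (p.1/2))) * exp (-(x * cosh (p.2/2))) := by
  unfold EE
  rw [← Real.exp_add]
  apply Real.exp_le_exp.2
  have h1 := Real.one_le_cosh (p.1/2)
  have h2 := Real.one_le_cosh (p.2/2)
  nlinarith [mul_nonneg (sub_nonneg.2 h1) (sub_nonneg.2 h2), hx.le,
    mul_le_mul_of_nonneg_left (show cosh (p.1/2) + cosh (p.2/2) ≤ 2 * (cosh (p.1/2) * cosh (p.2/2)) by nlinarith [mul_nonneg (sub_nonneg.2 h1) (sub_nonneg.2 h2)]) hx.le]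

/-- 2-D integrability of wedge pieces -/
lemma key2D (x b : ℝ) (hb : 0 ≤ b) (hx : 0 < x) (F G : ℝ → ℝ)
    (hFc : Continuous F) (hGc : Continuous G)
    (hF : ∀ t, |F t| ≤ exp ((b+1/2) * |t| )) (hG : ∀ t, |G t| ≤ exp ((b+1/2) * |t| )) :
    Integrable (fun p : ℝ × ℝ => EE x p * (F p.1 * G p.2)) := by
  have h1 : Integrable (fun t : ℝ => exp (-(x * cosh (t/2))) * exp ((b+1/2) * |t| )) := by
    apply integrable_exp_cosh_half_mul x hx (by fun_prop) (b+1/2) 1 one_pos.le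
    intro t
    rw [abs_of_pos (exp_pos _), one_mul]
  have hprod : Integrable (fun p : ℝ × ℝ =>
      (exp (-(x * cosh (p.1/2))) * exp ((b+1/2) * |p.1| )) *
      (exp (-(x * cosh (p.2/2))) * exp ((b+1/2) * |p.2| ))) := by
    have := h1.mul_prod h1
    rwa [← Measure.volume_eq_prod] at this
  apply hprod.mono' (Continuous.aestronglyMeasurable (by unfold EE; fun_prop))
  refine ae_of_all _ fun p => ?_
  rw [Real.norm_eq_abs, abs_mul, abs_of_pos (show (0:ℝ) < EE x p from exp_pos _), abs_mul]
  have hEE := EE_le x hx p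
  have hFG : |F p.1| * |G p.2| ≤ exp ((b+1/2) * |p.1| ) * exp ((b+1/2) * |p.2| ) :=
    mul_le_mul (hF _) (hG _) (abs_nonneg _) (exp_pos _).le
  calc EE x p * (|F p.1| * |G p.2|)
      ≤ (exp (-(x * cosh (p.1/2))) * exp (-(x * cosh (p.2/2)))) *
        (exp ((b+1/2) * |p.1| ) * exp ((b+1/2) * |p.2| )) := by
        apply mul_le_mul hEE hFG (by positivity) (by positivity)
  _ = (exp (-(x * cosh (p.1/2))) * exp ((b+1/2) * |p.1| )) *
      (exp (-(x * cosh (p.2/2))) * exp ((b+1/2) * |p.2| )) := by ring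

lemma bound_sinh_sinh (b : ℝ) (hb : 0 ≤ b) (t : ℝ) :
    |sinh (b*t) * sinh (t/2)| ≤ exp ((b+1/2) * |t| ) := by
  rw [abs_mul]
  calc |sinh (b*t)| * |sinh (t/2)| ≤ exp |b*t| * exp |t/2| :=
      mul_le_mul (abs_sinh_le _) (abs_sinh_le _) (abs_nonneg _) (exp_pos _).le
  _ = exp ((b+1/2) * |t| ) := by
      rw [← Real.exp_add, abs_mul, abs_of_nonneg hb, abs_div]
      norm_num
      ring_nf

lemma bound_cosh_half (b : ℝ) (hb : 0 ≤ b) (t : ℝ) : |cosh (t/2)| ≤ exp ((b+1/2) * |t| ) := by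
  calc |cosh (t/2)| ≤ exp |t/2| := abs_cosh_le _
  _ ≤ exp ((b+1/2) * |t| ) := by
      apply Real.exp_le_exp.2
      rw [abs_div]
      have := abs_nonneg t
      norm_num
      nlinarith

lemma bound_cosh_b (b : ℝ) (hb : 0 ≤ b) (t : ℝ) : |cosh (b*t)| ≤ exp ((b+1/2) * |t| ) := by
  calc |cosh (b*t)| ≤ exp |b*t| := abs_cosh_le _
  _ ≤ exp ((b+1/2) * |t| ) := by
      apply Real.exp_le_exp.2
      rw [abs_mul, abs_of_nonneg hb]
      nlinarith [abs_nonneg t]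

lemma bound_one (b : ℝ) (t : ℝ) : |(1:ℝ)| ≤ exp ((b+1/2) * |t| )  ∨ True := Or.inr trivial

lemma intPa (x b : ℝ) (hb : 0 ≤ b) (hx : 0 < x) : Integrable (Pa x b) := by
  have h := key2D x b hb hx (fun _ => 1) (fun t => sinh (b*t) * sinh (t/2))
    continuous_const (by fun_prop)
    (fun t => by rw [abs_one]; exact Real.one_le_exp (by positivity))
    (fun t => bound_sinh_sinh b hb t)
  apply h.congr
  refine ae_of_all _ fun p => ?_
  unfold Pa; simp

lemma intPb (x b : ℝ) (hb : 0 ≤ b) (hx : 0 < x) : Integrable (Pb x b) := by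
  have h := key2D x b hb hx (fun t => sinh (b*t) * sinh (t/2)) (fun _ => 1)
    (by fun_prop) continuous_const
    (fun t => bound_sinh_sinh b hb t)
    (fun t => by rw [abs_one]; exact Real.one_le_exp (by positivity))
  apply h.congr
  refine ae_of_all _ fun p => ?_
  unfold Pb; simp

lemma intPc (x b : ℝ) (hb : 0 ≤ b) (hx : 0 < x) : Integrable (Pc x b) := by
  have h := key2D x b hb hx (fun t => cosh (t/2)) (fun t => cosh (b*t))
    (by fun_prop) (by fun_prop) (fun t => bound_cosh_half b hb t) (fun t => bound_cosh_b b hb t)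
  apply h.congr
  refine ae_of_all _ fun p => ?_
  unfold Pc; ring

lemma intPd (x b : ℝ) (hb : 0 ≤ b) (hx : 0 < x) : Integrable (Pd x b) := by
  have h := key2D x b hb hx (fun t => cosh (b*t)) (fun t => cosh (t/2))
    (by fun_prop) (by fun_prop) (fun t => bound_cosh_b b hb t) (fun t => bound_cosh_half b hb t)
  apply h.congr
  refine ae_of_all _ fun p => ?_
  unfold Pd; ring

lemma SS_ind_H2_eq (x b : ℝ) :
    SS.indicator (H2f x b) = fun p => x * SS.indicator (Pa x b) p - b * SS.indicator (Pc x b) p := by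
  funext p
  by_cases h : p ∈ SS
  · rw [indicator_of_mem h, indicator_of_mem h, indicator_of_mem h]; rfl
  · rw [indicator_of_notMem h, indicator_of_notMem h, indicator_of_notMem h]; ring

lemma int_SS_H2 (x b : ℝ) (hb : 0 ≤ b) (hx : 0 < x) : Integrable (SS.indicator (H2f x b)) := by
  rw [SS_ind_H2_eq]
  exact ((((intPa x b hb hx).indicator SS_meas).const_mul x)).sub
    (((intPc x b hb hx).indicator SS_meas).const_mul b)

lemma inner_eval (x b : ℝ) (hb : 0 ≤ b) (hx : 0 < x) (v : ℝ) :
    ∫ u in Ioi (-v), H2f x b (v, u)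
      = (b / cosh (v/2) - b * cosh (v/2)) *
          (∫ u in Ioi (-v), exp (-(2*x*cosh (v/2) * cosh (u/2))) * cosh (b*u))
        - (1/cosh (v/2)) * exp (-(2*x*cosh (v/2) * cosh (v/2))) * sinh (b*v) := by
  have hC1 : 1 ≤ cosh (v/2) := Real.one_le_cosh _
  have hC0 : 0 < cosh (v/2) := Real.cosh_pos _
  have hc : 0 < 2*x*cosh (v/2) := by positivity
  -- the ibp identity specialized
  have hibp := ibp (2*x*cosh (v/2)) (1/2) b (-v) hc one_half_pos
  have hhalf : ∀ y : ℝ, (1/2 : ℝ) * y = y/2 := fun y => by ring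
  simp_rw [hhalf] at hibp
  rw [show (-v)/2 = -(v/2) by ring, Real.cosh_neg, show b * -v = -(b*v) by ring,
    Real.sinh_neg, mul_neg, neg_neg] at hibp
  -- pointwise decomposition
  have hpt : ∀ u : ℝ, H2f x b (v, u)
      = (-(1/cosh (v/2))) * (exp (-(2*x*cosh (v/2) * cosh (u/2))) *
          (b * cosh (b*u) - 2*x*cosh (v/2) * (1/2) * sinh (u/2) * sinh (b*u)))
        + (b / cosh (v/2) - b * cosh (v/2)) *
          (exp (-(2*x*cosh (v/2) * cosh (u/2))) * cosh (b*u)) := by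
    intro u
    have hEE : EE x (v, u) = exp (-(2*x*cosh (v/2) * cosh (u/2))) := by
      unfold EE; congr 1; ring
    unfold H2f Pa Pc
    rw [hEE]
    simp only
    field_simp
    ring
  have hI1 : Integrable (fun u => exp (-(2*x*cosh (v/2) * cosh (u/2))) *
      (b * cosh (b*u) - 2*x*cosh (v/2) * (1/2) * sinh (u/2) * sinh (b*u))) := by
    apply integrable_exp_cosh_half_mul _ hc (by fun_prop) (1/2 + |b|) (|b| + 2*x*cosh (v/2) * (1/2))
      (by positivity)
    intro t
    have h := bound_ibp (2*x*cosh (v/2)) (1/2) b hc one_half_pos t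
    simp_rw [hhalf] at h
    exact h
  have hI2 : Integrable (fun u => exp (-(2*x*cosh (v/2) * cosh (u/2))) * cosh (b*u)) :=
    integrable_exp_cosh_half_mul _ hc (by fun_prop) |b| 1 one_pos.le (bound_cosh b)
  calc ∫ u in Ioi (-v), H2f x b (v, u)
      = ∫ u in Ioi (-v), ((-(1/cosh (v/2))) * (exp (-(2*x*cosh (v/2) * cosh (u/2))) *
          (b * cosh (b*u) - 2*x*cosh (v/2) * (1/2) * sinh (u/2) * sinh (b*u)))
        + (b / cosh (v/2) - b * cosh (v/2)) *
          (exp (-(2*x*cosh (v/2) * cosh (u/2))) * cosh (b*u))) :=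
      setIntegral_congr_fun measurableSet_Ioi fun u _ => hpt u
  _ = (-(1/cosh (v/2))) * (∫ u in Ioi (-v), exp (-(2*x*cosh (v/2) * cosh (u/2))) *
          (b * cosh (b*u) - 2*x*cosh (v/2) * (1/2) * sinh (u/2) * sinh (b*u)))
        + (b / cosh (v/2) - b * cosh (v/2)) *
          (∫ u in Ioi (-v), exp (-(2*x*cosh (v/2) * cosh (u/2))) * cosh (b*u)) := by
      rw [integral_add ((hI1.const_mul _).integrableOn) ((hI2.const_mul _).integrableOn),
        integral_const_mul, integral_const_mul]
  _ = _ := by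
      rw [hibp]
      ring

lemma H2_nonpos (x b : ℝ) (hb : 0 ≤ b) (hx : 0 < x) :
    ∫ p : ℝ × ℝ, SS.indicator (H2f x b) p ≤ 0 := by
  have hSH2int := int_SS_H2 x b hb hx
  have hSH2int' : Integrable (SS.indicator (H2f x b)) (volume.prod volume) := by
    rwa [Measure.volume_eq_prod] at hSH2int
  have hIter : ∫ p : ℝ × ℝ, SS.indicator (H2f x b) p
      = ∫ v : ℝ, ∫ u : ℝ, SS.indicator (H2f x b) (v, u) := by
    have h := integral_prod _ hSH2int'
    rwa [← Measure.volume_eq_prod] at h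
  have hInnerInd : ∀ v : ℝ, ∫ u : ℝ, SS.indicator (H2f x b) (v, u)
      = ∫ u in Ioi (-v), H2f x b (v, u) := by
    intro v
    rw [← integral_indicator measurableSet_Ioi]
    congr 1; funext u
    by_cases h : -v < u
    · rw [indicator_of_mem (mem_Ioi.2 h),
        indicator_of_mem (show (v,u) ∈ SS from by simp only [SS, mem_setOf_eq]; linarith)]
    · rw [indicator_of_notMem (show (v,u) ∉ SS from by
          simp only [SS, mem_setOf_eq]; push_neg at h ⊢; linarith),
        indicator_of_notMem (show u ∉ Ioi (-v) from by simpa using h)]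
  have hOcont : Continuous (fun v : ℝ => 1/cosh (v/2) * exp (-(2*x*cosh (v/2) * cosh (v/2))) * sinh (b*v)) := by
    refine Continuous.mul (Continuous.mul ?_ (by fun_prop)) (by fun_prop)
    exact continuous_const.div (by fun_prop) (fun v => (Real.cosh_pos _).ne')
  have hOint : Integrable (fun v => (1/cosh (v/2)) * exp (-(2*x*cosh (v/2) * cosh (v/2))) * sinh (b*v)) := by
    apply integrable_of_cosh_bound hOcont.aestronglyMeasurable (2*x) (1/2) b 1 (by positivity) one_half_pos one_pos.le
    intro t
    have hC1 : 1 ≤ cosh (t/2) := Real.one_le_cosh _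
    have hC0 : 0 < cosh (t/2) := Real.cosh_pos _
    rw [abs_mul, abs_mul]
    have h1 : |1/cosh (t/2)| ≤ 1 := by
      rw [abs_of_pos (by positivity)]
      rw [div_le_one hC0]; exact hC1
    have h2 : |exp (-(2*x*cosh (t/2) * cosh (t/2)))| ≤ exp (-(2*x * cosh ((1/2) * t))) := by
      rw [abs_of_pos (exp_pos _)]
      apply Real.exp_le_exp.2
      rw [show (1/2:ℝ)*t = t/2 by ring]
      nlinarith [mul_le_mul_of_nonneg_left hC1 (show (0:ℝ) ≤ 2*x*cosh (t/2) by positivity)]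
    have h3 : |sinh (b*t)| ≤ exp (b * |t| ) := by
      have := abs_sinh_le (b*t)
      rwa [abs_mul, abs_of_nonneg hb] at this
    calc |1/cosh (t/2)| * |exp (-(2*x*cosh (t/2) * cosh (t/2)))| * |sinh (b*t)|
        ≤ 1 * exp (-(2*x * cosh ((1/2) * t))) * exp (b * |t| ) := by
          apply mul_le_mul _ h3 (abs_nonneg _) (by positivity)
          exact mul_le_mul h1 h2 (abs_nonneg _) one_pos.le
    _ = 1 * exp (-(2*x * cosh ((1/2) * t)) + b * |t| ) := by rw [Real.exp_add]; ring
  set Jv : ℝ → ℝ := fun v => ∫ u in Ioi (-v), exp (-(2*x*cosh (v/2) * cosh (u/2))) * cosh (b*u) with hJv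
  set Ov : ℝ → ℝ := fun v => (1/cosh (v/2)) * exp (-(2*x*cosh (v/2) * cosh (v/2))) * sinh (b*v) with hOv
  have hJnonneg : ∀ v, 0 ≤ Jv v := fun v =>
    setIntegral_nonneg measurableSet_Ioi fun u _ => by positivity
  have hInner_eq : (fun v => ∫ u : ℝ, SS.indicator (H2f x b) (v, u)) =
      fun v => (b / cosh (v/2) - b * cosh (v/2)) * Jv v - Ov v :=
    funext fun v => by rw [hInnerInd v, inner_eval x b hb hx v]
  have hInnerInt : Integrable (fun v => ∫ u : ℝ, SS.indicator (H2f x b) (v, u)) :=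
    hSH2int'.integral_prod_left
  have hNint : Integrable (fun v => (b / cosh (v/2) - b * cosh (v/2)) * Jv v) := by
    have h := hInnerInt
    rw [hInner_eq] at h
    have h2 := h.add hOint
    apply h2.congr
    refine ae_of_all _ fun v => ?_
    simp only [Pi.add_apply]
    ring
  have hodd : ∀ v, Ov (-v) = - Ov v := by
    intro v
    rw [hOv]
    simp only
    rw [show ((-v)/2 : ℝ) = -(v/2) by ring, Real.cosh_neg, show b * -v = -(b*v) by ring,
      Real.sinh_neg]
    ring
  rw [hIter, hInner_eq]
  have hsplit : ∫ v, ((b / cosh (v/2) - b * cosh (v/2)) * Jv v - Ov v)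
      = (∫ v, (b / cosh (v/2) - b * cosh (v/2)) * Jv v) - ∫ v, Ov v :=
    integral_sub hNint hOint
  rw [hsplit, integral_odd hOint hodd, sub_zero]
  apply integral_nonpos
  intro v
  have hC1 : 1 ≤ cosh (v/2) := Real.one_le_cosh _
  have hC0 : 0 < cosh (v/2) := Real.cosh_pos _
  apply mul_nonpos_of_nonpos_of_nonneg _ (hJnonneg v)
  have h1 : b / cosh (v/2) ≤ b := div_le_self hb hC1
  have h2 : b ≤ b * cosh (v/2) := le_mul_of_one_le_right hb hC1
  linarith




set_option maxHeartbeats 2000000 in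
lemma star (b x : ℝ) (hb : 0 ≤ b) (hx : 0 < x) :
    x * (besselK (b+1/2) x ^ 2 - besselK (b-1/2) x ^ 2)
      ≤ 2 * b * (besselK (b+1/2) x * besselK (b-1/2) x) := by
  have hfInt : ∀ a : ℝ, Integrable (fun t => exp (-(x * cosh t)) * cosh (a * t)) :=
    fun a => integrable_besselK_kernel a x hx
  set g : ℝ → ℝ → ℝ := fun a => (Ioi (0:ℝ)).indicator (fun t => exp (-(x * cosh t)) * cosh (a * t))
    with hg
  have hgInt : ∀ a, Integrable (g a) := fun a => (hfInt a).indicator measurableSet_Ioi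
  have hgK : ∀ a, besselK a x = ∫ t, g a t := by
    intro a
    rw [besselK_eq, hg, integral_indicator measurableSet_Ioi]
  have hprod : ∀ a a' : ℝ, Integrable (fun p : ℝ × ℝ => g a p.1 * g a' p.2) := by
    intro a a'
    have h := (hgInt a).mul_prod (hgInt a')
    rwa [← Measure.volume_eq_prod] at h
  have hKK : ∀ a a' : ℝ, besselK a x * besselK a' x = ∫ p : ℝ × ℝ, g a p.1 * g a' p.2 := by
    intro a a'
    rw [hgK a, hgK a', ← integral_prod_mul (g a) (g a'), ← Measure.volume_eq_prod]
  set Q : Set (ℝ × ℝ) := Ioi (0:ℝ) ×ˢ Ioi (0:ℝ) with hQdef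
  set FF : ℝ × ℝ → ℝ := fun p => exp (-(x * cosh p.1)) * exp (-(x * cosh p.2)) *
    (x * (cosh ((b+1/2) * p.1) * cosh ((b+1/2) * p.2) - cosh ((b-1/2) * p.1) * cosh ((b-1/2) * p.2))
     - b * (cosh ((b+1/2) * p.1) * cosh ((b-1/2) * p.2)
            + cosh ((b-1/2) * p.1) * cosh ((b+1/2) * p.2))) with hFF
  have hIa : Integrable (fun p : ℝ × ℝ => x * (g (b+1/2) p.1 * g (b+1/2) p.2)) :=
    (hprod _ _).const_mul _
  have hIb : Integrable (fun p : ℝ × ℝ => x * (g (b-1/2) p.1 * g (b-1/2) p.2)) :=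
    (hprod _ _).const_mul _
  have hIc : Integrable (fun p : ℝ × ℝ => b * (g (b+1/2) p.1 * g (b-1/2) p.2)) :=
    (hprod _ _).const_mul _
  have hId : Integrable (fun p : ℝ × ℝ => b * (g (b-1/2) p.1 * g (b+1/2) p.2)) :=
    (hprod _ _).const_mul _
  have hIab : Integrable (fun p : ℝ × ℝ => x * (g (b+1/2) p.1 * g (b+1/2) p.2)
      - x * (g (b-1/2) p.1 * g (b-1/2) p.2)) := hIa.sub hIb
  have hIcd : Integrable (fun p : ℝ × ℝ => b * (g (b+1/2) p.1 * g (b-1/2) p.2)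
      + b * (g (b-1/2) p.1 * g (b+1/2) p.2)) := hIc.add hId
  have hTQ : x * (besselK (b+1/2) x ^ 2 - besselK (b-1/2) x ^ 2)
      - 2*b*(besselK (b+1/2) x * besselK (b-1/2) x) = ∫ p : ℝ × ℝ, Q.indicator FF p := by
    have e1 : ∫ p : ℝ × ℝ, (x * (g (b+1/2) p.1 * g (b+1/2) p.2)
          - x * (g (b-1/2) p.1 * g (b-1/2) p.2)
        - (b * (g (b+1/2) p.1 * g (b-1/2) p.2) + b * (g (b-1/2) p.1 * g (b+1/2) p.2)))
        = x * (∫ p : ℝ × ℝ, g (b+1/2) p.1 * g (b+1/2) p.2)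
          - x * (∫ p : ℝ × ℝ, g (b-1/2) p.1 * g (b-1/2) p.2)
          - (b * (∫ p : ℝ × ℝ, g (b+1/2) p.1 * g (b-1/2) p.2)
             + b * (∫ p : ℝ × ℝ, g (b-1/2) p.1 * g (b+1/2) p.2)) := by
      rw [integral_sub hIab hIcd, integral_sub hIa hIb, integral_add hIc hId,
        integral_const_mul, integral_const_mul, integral_const_mul, integral_const_mul]
    have e2 : ∀ p : ℝ × ℝ, (x * (g (b+1/2) p.1 * g (b+1/2) p.2)
          - x * (g (b-1/2) p.1 * g (b-1/2) p.2)
        - (b * (g (b+1/2) p.1 * g (b-1/2) p.2) + b * (g (b-1/2) p.1 * g (b+1/2) p.2)))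
        = Q.indicator FF p := by
      intro p
      by_cases h1 : p.1 ∈ Ioi (0:ℝ) <;> by_cases h2 : p.2 ∈ Ioi (0:ℝ)
      · have hQ : p ∈ Q := ⟨h1, h2⟩
        rw [hg]
        simp only [indicator_of_mem h1, indicator_of_mem h2, indicator_of_mem hQ, hFF]
        ring
      · have hQ : p ∉ Q := fun hc => h2 hc.2
        rw [hg]
        simp only [indicator_of_mem h1, indicator_of_notMem h2, indicator_of_notMem hQ]
        ring
      · have hQ : p ∉ Q := fun hc => h1 hc.1
        rw [hg]
        simp only [indicator_of_notMem h1, indicator_of_mem h2, indicator_of_notMem hQ]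
        ring
      · have hQ : p ∉ Q := fun hc => h1 hc.1
        rw [hg]
        simp only [indicator_of_notMem h1, indicator_of_notMem h2, indicator_of_notMem hQ]
        ring
    rw [← integral_congr_ae (ae_of_all _ e2), e1,
      ← hKK (b+1/2) (b+1/2), ← hKK (b-1/2) (b-1/2), ← hKK (b+1/2) (b-1/2), ← hKK (b-1/2) (b+1/2)]
    ring
  -- change of variables
  have hQmeas : MeasurableSet Q := measurableSet_Ioi.prod measurableSet_Ioi
  have hcov : ∫ p : ℝ × ℝ, Q.indicator FF p
      = (1/2) * ∫ p in {q : ℝ × ℝ | |q.1| < q.2}, HHf x b p := by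
    rw [integral_indicator hQmeas, hQdef, cov FF]
    congr 1
    apply setIntegral_congr_fun
    · apply measurableSet_lt <;> fun_prop
    · intro p _
      have h := kernel_id x b p.2 p.1
      rw [hFF]
      simp only
      unfold HHf Pa Pb Pc Pd EE
      calc exp (-(x * cosh ((p.2+p.1)/2))) * exp (-(x * cosh ((p.2-p.1)/2))) *
          (x * (cosh ((b+1/2) * ((p.2+p.1)/2)) * cosh ((b+1/2) * ((p.2-p.1)/2))
              - cosh ((b-1/2) * ((p.2+p.1)/2)) * cosh ((b-1/2) * ((p.2-p.1)/2)))
           - b * (cosh ((b+1/2) * ((p.2+p.1)/2)) * cosh ((b-1/2) * ((p.2-p.1)/2))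
              + cosh ((b-1/2) * ((p.2+p.1)/2)) * cosh ((b+1/2) * ((p.2-p.1)/2))))
          = exp (-(2*x*(cosh (p.1/2) * cosh (p.2/2)))) *
            (x * (sinh (b*p.2) * sinh (p.2/2) + sinh (b*p.1) * sinh (p.1/2))
             - b * (cosh (b*p.2) * cosh (p.1/2) + cosh (b*p.1) * cosh (p.2/2))) := h
      _ = _ := by ring
  -- swap A to Abar and sum to SS
  set A : Set (ℝ × ℝ) := {q : ℝ × ℝ | |q.1| < q.2} with hA
  set Abar : Set (ℝ × ℝ) := {q : ℝ × ℝ | |q.2| < q.1} with hAbar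
  have hAmeas : MeasurableSet A := by
    rw [hA]; apply measurableSet_lt <;> fun_prop
  have hAbarmeas : MeasurableSet Abar := by
    rw [hAbar]; apply measurableSet_lt <;> fun_prop
  have hHHint : Integrable (HHf x b) := by
    have h1 := ((intPa x b hb hx).const_mul x).add ((intPb x b hb hx).const_mul x)
    have h2 := ((intPc x b hb hx).const_mul b).add ((intPd x b hb hx).const_mul b)
    have h3 := h1.sub h2
    apply h3.congr
    refine ae_of_all _ fun p => ?_
    simp only [Pi.add_apply, Pi.sub_apply]
    unfold HHf
    ring
  have hHH_swap : ∀ p : ℝ × ℝ, HHf x b p.swap = HHf x b p := by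
    intro p
    unfold HHf Pa Pb Pc Pd
    rw [EE_swap]
    simp only [Prod.fst_swap, Prod.snd_swap]
    ring
  have hswap : ∫ p : ℝ × ℝ, Abar.indicator (HHf x b) p = ∫ p : ℝ × ℝ, A.indicator (HHf x b) p := by
    have h := integral_prod_swap (μ := (volume : Measure ℝ)) (ν := (volume : Measure ℝ))
      (Abar.indicator (HHf x b))
    rw [← Measure.volume_eq_prod] at h
    rw [← h]
    congr 1
    funext z
    by_cases hz : z ∈ A
    · have hz' : z.swap ∈ Abar := hz
      rw [indicator_of_mem hz', indicator_of_mem hz, hHH_swap]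
    · have hz' : z.swap ∉ Abar := hz
      rw [indicator_of_notMem hz', indicator_of_notMem hz]
  have hae : ∀ᵐ p : ℝ × ℝ, A.indicator (HHf x b) p + Abar.indicator (HHf x b) p
      = SS.indicator (HHf x b) p := by
    have hN : volume ({p : ℝ × ℝ | p.1 = p.2} ∪ {p : ℝ × ℝ | p.1 = -p.2}) = 0 :=
      measure_union_null null_line1 null_line2
    have hNae : ∀ᵐ p : ℝ × ℝ, p ∉ ({p : ℝ × ℝ | p.1 = p.2} ∪ {p : ℝ × ℝ | p.1 = -p.2}) := by
      exact measure_eq_zero_iff_ae_notMem.mp hN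
    filter_upwards [hNae] with p hp
    have hne1 : p.1 ≠ p.2 := fun hc => hp (Or.inl hc)
    have hne2 : p.1 ≠ -p.2 := fun hc => hp (Or.inr hc)
    by_cases hS : p ∈ SS
    · have h0 : 0 < p.1 + p.2 := hS
      rcases lt_trichotomy p.1 p.2 with hlt | heq | hgt
      · have hmem : p ∈ A := by
          rw [hA, mem_setOf_eq, abs_lt]
          constructor <;> [linarith; exact hlt]
        have hnmem : p ∉ Abar := by
          rw [hAbar, mem_setOf_eq, abs_lt]
          push_neg
          intro h'
          linarith
        rw [indicator_of_mem hmem, indicator_of_notMem hnmem, indicator_of_mem hS, add_zero]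
      · exact absurd heq hne1
      · have hmem : p ∈ Abar := by
          rw [hAbar, mem_setOf_eq, abs_lt]
          constructor <;> [linarith; exact hgt]
        have hnmem : p ∉ A := by
          rw [hA, mem_setOf_eq, abs_lt]
          push_neg
          intro h'
          linarith
        rw [indicator_of_mem hmem, indicator_of_notMem hnmem, indicator_of_mem hS, zero_add]
    · have h0 : ¬ (0 < p.1 + p.2) := hS
      have hnA : p ∉ A := by
        rw [hA, mem_setOf_eq, abs_lt]
        push_neg
        intro h'
        linarith
      have hnAbar : p ∉ Abar := by
        rw [hAbar, mem_setOf_eq, abs_lt]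
        push_neg
        intro h'
        linarith
      rw [indicator_of_notMem hnA, indicator_of_notMem hnAbar, indicator_of_notMem hS, add_zero]
  have hsum : (∫ p : ℝ × ℝ, A.indicator (HHf x b) p) + (∫ p : ℝ × ℝ, Abar.indicator (HHf x b) p)
      = ∫ p : ℝ × ℝ, SS.indicator (HHf x b) p := by
    rw [← integral_add (hHHint.indicator hAmeas) (hHHint.indicator hAbarmeas)]
    exact integral_congr_ae hae
  -- pieces over SS
  have hSind : ∀ p : ℝ × ℝ, SS.indicator (HHf x b) p
      = x * SS.indicator (Pa x b) p + x * SS.indicator (Pb x b) p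
        - (b * SS.indicator (Pc x b) p + b * SS.indicator (Pd x b) p) := by
    intro p
    by_cases h : p ∈ SS
    · simp only [indicator_of_mem h]
      unfold HHf
      ring
    · simp only [indicator_of_notMem h]
      ring
  have hIPa := (intPa x b hb hx).indicator SS_meas
  have hIPb := (intPb x b hb hx).indicator SS_meas
  have hIPc := (intPc x b hb hx).indicator SS_meas
  have hIPd := (intPd x b hb hx).indicator SS_meas
  have hIPab : Integrable (fun p : ℝ × ℝ => x * SS.indicator (Pa x b) p
      + x * SS.indicator (Pb x b) p) := (hIPa.const_mul x).add (hIPb.const_mul x)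
  have hIPcd : Integrable (fun p : ℝ × ℝ => b * SS.indicator (Pc x b) p
      + b * SS.indicator (Pd x b) p) := (hIPc.const_mul b).add (hIPd.const_mul b)
  have hSsplit : ∫ p : ℝ × ℝ, SS.indicator (HHf x b) p
      = x * (∫ p : ℝ × ℝ, SS.indicator (Pa x b) p) + x * (∫ p : ℝ × ℝ, SS.indicator (Pb x b) p)
        - (b * (∫ p : ℝ × ℝ, SS.indicator (Pc x b) p)
           + b * (∫ p : ℝ × ℝ, SS.indicator (Pd x b) p)) := by
    rw [integral_congr_ae (ae_of_all _ hSind), integral_sub hIPab hIPcd,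
      integral_add (hIPa.const_mul x) (hIPb.const_mul x),
      integral_add (hIPc.const_mul b) (hIPd.const_mul b),
      integral_const_mul, integral_const_mul, integral_const_mul, integral_const_mul]
  -- swap-invariance of SS pieces
  have hSS_swap_mem : ∀ z : ℝ × ℝ, z.swap ∈ SS ↔ z ∈ SS := by
    intro z
    simp only [SS, mem_setOf_eq, Prod.fst_swap, Prod.snd_swap]
    constructor <;> intro h <;> linarith
  have hPab : ∫ p : ℝ × ℝ, SS.indicator (Pb x b) p = ∫ p : ℝ × ℝ, SS.indicator (Pa x b) p := by
    have h := integral_prod_swap (μ := (volume : Measure ℝ)) (ν := (volume : Measure ℝ))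
      (SS.indicator (Pa x b))
    rw [← Measure.volume_eq_prod] at h
    rw [← h]
    congr 1
    funext z
    by_cases hz : z ∈ SS
    · rw [indicator_of_mem ((hSS_swap_mem z).2 hz), indicator_of_mem hz]
      unfold Pa Pb
      rw [EE_swap]
      simp only [Prod.fst_swap, Prod.snd_swap]
    · rw [indicator_of_notMem (fun hc => hz ((hSS_swap_mem z).1 hc)), indicator_of_notMem hz]
  have hPcd : ∫ p : ℝ × ℝ, SS.indicator (Pd x b) p = ∫ p : ℝ × ℝ, SS.indicator (Pc x b) p := by
    have h := integral_prod_swap (μ := (volume : Measure ℝ)) (ν := (volume : Measure ℝ))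
      (SS.indicator (Pc x b))
    rw [← Measure.volume_eq_prod] at h
    rw [← h]
    congr 1
    funext z
    by_cases hz : z ∈ SS
    · rw [indicator_of_mem ((hSS_swap_mem z).2 hz), indicator_of_mem hz]
      unfold Pc Pd
      rw [EE_swap]
      simp only [Prod.fst_swap, Prod.snd_swap]
    · rw [indicator_of_notMem (fun hc => hz ((hSS_swap_mem z).1 hc)), indicator_of_notMem hz]
  -- H2 split
  have hSindH2 : ∀ p : ℝ × ℝ, SS.indicator (H2f x b) p
      = x * SS.indicator (Pa x b) p - b * SS.indicator (Pc x b) p := by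
    intro p
    by_cases h : p ∈ SS
    · simp only [indicator_of_mem h]
      unfold H2f
      ring
    · simp only [indicator_of_notMem h]
      ring
  have hH2split : ∫ p : ℝ × ℝ, SS.indicator (H2f x b) p
      = x * (∫ p : ℝ × ℝ, SS.indicator (Pa x b) p)
        - b * (∫ p : ℝ × ℝ, SS.indicator (Pc x b) p) := by
    rw [integral_congr_ae (ae_of_all _ hSindH2), integral_sub (hIPa.const_mul x) (hIPc.const_mul b),
      integral_const_mul, integral_const_mul]
  -- put everything together
  have hAind : ∫ p in A, HHf x b p = ∫ p : ℝ × ℝ, A.indicator (HHf x b) p :=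
    (integral_indicator hAmeas).symm
  have hfinal : x * (besselK (b+1/2) x ^ 2 - besselK (b-1/2) x ^ 2)
      - 2*b*(besselK (b+1/2) x * besselK (b-1/2) x)
      = (1/2) * ∫ p : ℝ × ℝ, SS.indicator (H2f x b) p := by
    rw [hTQ, hcov, hAind]
    have h1 : (∫ p : ℝ × ℝ, A.indicator (HHf x b) p)
        = (1/2) * ∫ p : ℝ × ℝ, SS.indicator (HHf x b) p := by
      rw [← hsum, hswap]
      ring
    rw [h1, hSsplit, hH2split, hPab, hPcd]
    ring
  have hle := H2_nonpos x b hb hx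
  nlinarith [hfinal, hle]


end BesselAux

set_option maxHeartbeats 2000000 in
theorem besselK_logDeriv_upper (ν : ℝ) (hν : 1 / 2 ≤ |ν|) (μ : ℝ)
    (hμ : μ = ν ^ 2 - 1 / 4) (x : ℝ) (hx : 0 < x) :
    x * deriv (besselK ν) x / besselK ν x ≤
      -Real.sqrt (x ^ 2 + μ) + Real.sqrt μ - |ν| := by
  set m := |ν| with hm
  have hm2 : 1/2 ≤ m := hν
  have hKeven : besselK ν = besselK m := BesselAux.besselK_even ν
  rw [hKeven]
  have hK := BesselAux.besselK_pos m x hx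
  have hK' := BesselAux.besselK_pos (m-1) x hx
  have hD : deriv (besselK m) x = -besselK (m-1) x - m / x * besselK m x :=
    BesselAux.deriv_besselK m x hx
  have hμ' : μ = m^2 - 1/4 := by rw [hμ, hm, sq_abs]
  have hμ0 : 0 ≤ μ := by nlinarith
  set S := Real.sqrt (x^2 + μ) with hS
  have hS0 : 0 ≤ S := Real.sqrt_nonneg _
  have hSsq : S^2 = x^2 + μ := Real.sq_sqrt (by positivity)
  have hb : 0 ≤ m - 1/2 := by linarith
  have hstar := BesselAux.star (m - 1/2) x hb hx
  rw [show m - 1/2 + 1/2 = m by ring, show m - 1/2 - 1/2 = m - 1 by ring] at hstar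
  have hsqrtmu : m - 1/2 ≤ Real.sqrt μ := by
    have h1 : ((m - 1/2)^2 : ℝ) ≤ μ := by nlinarith
    calc m - 1/2 = Real.sqrt ((m-1/2)^2) := (Real.sqrt_sq hb).symm
    _ ≤ Real.sqrt μ := Real.sqrt_le_sqrt h1
  have hmusq : (Real.sqrt μ)^2 = μ := Real.sq_sqrt hμ0
  have hmu0 : 0 ≤ Real.sqrt μ := Real.sqrt_nonneg _
  have hmain : (S - Real.sqrt μ) * besselK m x ≤ x * besselK (m-1) x := by
    have hA : 0 ≤ x * besselK (m-1) x + Real.sqrt μ * besselK m x := by positivity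
    have p1 : x * (x * (besselK m x ^ 2 - besselK (m-1) x ^ 2))
        ≤ x * (2 * (m - 1/2) * (besselK m x * besselK (m-1) x)) :=
      mul_le_mul_of_nonneg_left hstar hx.le
    have p2 : (m - 1/2) * (2 * x * (besselK m x * besselK (m-1) x))
        ≤ Real.sqrt μ * (2 * x * (besselK m x * besselK (m-1) x)) :=
      mul_le_mul_of_nonneg_right hsqrtmu (by positivity)
    have hsq : (S * besselK m x)^2 ≤ (x * besselK (m-1) x + Real.sqrt μ * besselK m x)^2 := by
      nlinarith [p1, p2, hmusq, hSsq]
    have hle : S * besselK m x ≤ x * besselK (m-1) x + Real.sqrt μ * besselK m x := by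
      nlinarith [hsq, hA, mul_nonneg hS0 hK.le, sq_nonneg (S * besselK m x
        - (x * besselK (m-1) x + Real.sqrt μ * besselK m x))]
    nlinarith [hle]
  rw [hD, div_le_iff₀ hK]
  have hfield : x * (-besselK (m-1) x - m / x * besselK m x)
      = -(x * besselK (m-1) x) - m * besselK m x := by
    field_simp
  rw [hfield]
  nlinarith [hmain]
end

section
/- Let ν be any real number. Then x · K_ν′(x)/K_ν(x) tends to −|ν| as x tends to 0 from the right, where K_ν′ denotes the derivative of K_ν with respect to x. -/
open Real MeasureTheory Set Filter

namespace BesselKAux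

lemma cosh_le_exp_abs (t : ℝ) : Real.cosh t ≤ Real.exp |t| := by
  rw [← Real.cosh_abs, Real.cosh_eq]
  have h1 : Real.exp (-|t|) ≤ Real.exp |t| :=
    Real.exp_le_exp.2 (by linarith [abs_nonneg t])
  linarith

lemma abs_sinh_le_exp_abs (t : ℝ) : |Real.sinh t| ≤ Real.exp |t| := by
  rw [Real.abs_sinh]
  calc Real.sinh |t| ≤ Real.cosh |t| := (Real.sinh_lt_cosh _).le
  _ ≤ Real.exp |(|t|)| := cosh_le_exp_abs _
  _ = Real.exp |t| := by rw [abs_abs]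

lemma key_bound {x c t : ℝ} (hx : 0 < x) (ht : 0 ≤ t) :
    Real.exp (c * t) * Real.exp (-x * Real.cosh t) ≤
      Real.exp (2 * (c + 1) ^ 2 / x) * Real.exp (-t) := by
  rw [← Real.exp_add, ← Real.exp_add]
  apply Real.exp_le_exp.2
  have h3 : Real.exp (t / 2) * Real.exp (t / 2) = Real.exp t := by
    rw [← Real.exp_add]; ring_nf
  have h4 : 1 + t / 2 ≤ Real.exp (t / 2) := by linarith [Real.add_one_le_exp (t / 2)]
  have h2 : t ^ 2 / 4 ≤ Real.exp t := by nlinarith [Real.exp_pos (t / 2)]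
  have h1 : Real.exp t / 2 ≤ Real.cosh t := by
    rw [Real.cosh_eq]; linarith [Real.exp_pos (-t)]
  have hcosh : t ^ 2 / 8 ≤ Real.cosh t := by linarith
  have hB : 2 * (c + 1) ^ 2 / x * x = 2 * (c + 1) ^ 2 :=
    div_mul_cancel₀ _ hx.ne'
  nlinarith [sq_nonneg (x * t - 4 * (c + 1)), mul_le_mul_of_nonneg_left hcosh (mul_pos hx hx).le,
    mul_pos hx hx]

lemma integrableOn_aux {x c : ℝ} (hx : 0 < x) {g : ℝ → ℝ} (hg : Continuous g)
    (hgb : ∀ t, 0 ≤ t → |g t| ≤ Real.exp (c * t)) :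
    IntegrableOn (fun t => Real.exp (-x * Real.cosh t) * g t) (Ioi 0) := by
  have hint : IntegrableOn (fun t : ℝ => Real.exp (2 * (c + 1) ^ 2 / x) * Real.exp (-t)) (Ioi 0) := by
    have := (exp_neg_integrableOn_Ioi (0:ℝ) one_pos).const_mul (Real.exp (2 * (c + 1) ^ 2 / x))
    simp at this; exact this
  refine hint.mono' ?_ ?_
  · exact ((Real.continuous_exp.comp (by continuity)).mul hg).aestronglyMeasurable
  · filter_upwards [ae_restrict_mem measurableSet_Ioi] with t ht
    have ht' : (0:ℝ) ≤ t := le_of_lt ht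
    calc ‖Real.exp (-x * Real.cosh t) * g t‖ = Real.exp (-x * Real.cosh t) * |g t| := by
          rw [norm_eq_abs, abs_mul, abs_of_pos (Real.exp_pos _)]
    _ ≤ Real.exp (-x * Real.cosh t) * Real.exp (c * t) := by
          exact mul_le_mul_of_nonneg_left (hgb t ht') (Real.exp_pos _).le
    _ = Real.exp (c * t) * Real.exp (-x * Real.cosh t) := mul_comm _ _
    _ ≤ _ := key_bound hx ht'


lemma abs_mul_self_nonneg (ν t : ℝ) (ht : 0 ≤ t) : |ν * t| = |ν| * t := by
  rw [abs_mul, abs_of_nonneg ht]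

lemma intK (ν : ℝ) {x : ℝ} (hx : 0 < x) :
    IntegrableOn (fun t => Real.exp (-x * Real.cosh t) * Real.cosh (ν * t)) (Ioi 0) := by
  refine integrableOn_aux (c := |ν|) hx (by continuity) fun t ht => ?_
  rw [abs_of_pos (Real.cosh_pos _)]
  calc Real.cosh (ν * t) ≤ Real.exp |ν * t| := cosh_le_exp_abs _
  _ = Real.exp (|ν| * t) := by rw [abs_mul_self_nonneg ν t ht]

lemma intK1 (ν : ℝ) {x : ℝ} (hx : 0 < x) :
    IntegrableOn (fun t => Real.exp (-x * Real.cosh t) * (Real.cosh t * Real.cosh (ν * t)))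
      (Ioi 0) := by
  refine integrableOn_aux (c := |ν| + 1) hx (by continuity) fun t ht => ?_
  rw [abs_of_pos (mul_pos (Real.cosh_pos _) (Real.cosh_pos _))]
  calc Real.cosh t * Real.cosh (ν * t) ≤ Real.exp |t| * Real.exp |ν * t| :=
        mul_le_mul (cosh_le_exp_abs _) (cosh_le_exp_abs _) (Real.cosh_pos _).le (Real.exp_pos _).le
  _ = Real.exp ((|ν| + 1) * t) := by
        rw [← Real.exp_add, abs_of_nonneg ht, abs_mul_self_nonneg ν t ht]; ring_nf

lemma intSS (ν : ℝ) {x : ℝ} (hx : 0 < x) :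
    IntegrableOn (fun t => Real.exp (-x * Real.cosh t) * (Real.sinh t * Real.sinh (ν * t)))
      (Ioi 0) := by
  refine integrableOn_aux (c := |ν| + 1) hx (by continuity) fun t ht => ?_
  calc |Real.sinh t * Real.sinh (ν * t)| = |Real.sinh t| * |Real.sinh (ν * t)| := abs_mul _ _
  _ ≤ Real.exp |t| * Real.exp |ν * t| :=
        mul_le_mul (abs_sinh_le_exp_abs _) (abs_sinh_le_exp_abs _) (abs_nonneg _) (Real.exp_pos _).le
  _ = Real.exp ((|ν| + 1) * t) := by
        rw [← Real.exp_add, abs_of_nonneg ht, abs_mul_self_nonneg ν t ht]; ring_nf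

lemma intS {x : ℝ} (hx : 0 < x) :
    IntegrableOn (fun t => Real.exp (-x * Real.cosh t) * Real.sinh t) (Ioi 0) := by
  refine integrableOn_aux (c := 1) hx (by continuity) fun t ht => ?_
  calc |Real.sinh t| ≤ Real.exp |t| := abs_sinh_le_exp_abs _
  _ = Real.exp (1 * t) := by rw [abs_of_nonneg ht, one_mul]

/-- Derivative of `besselK ν` for `x > 0`. -/
lemma besselK_hasDerivAt (ν : ℝ) {x : ℝ} (hx : 0 < x) :
    HasDerivAt (besselK ν)
      (-∫ t in Ioi (0:ℝ), Real.exp (-x * Real.cosh t) * (Real.cosh t * Real.cosh (ν * t))) x := by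
  have key := hasDerivAt_integral_of_dominated_loc_of_deriv_le (μ := volume.restrict (Ioi (0:ℝ)))
    (F := fun y t => Real.exp (-y * Real.cosh t) * Real.cosh (ν * t))
    (F' := fun y t => Real.exp (-y * Real.cosh t) * -Real.cosh t * Real.cosh (ν * t))
    (x₀ := x) (s := Metric.ball x (x / 2))
    (bound := fun t => Real.exp (-(x/2) * Real.cosh t) * (Real.cosh t * Real.cosh (ν * t)))
    (Metric.ball_mem_nhds x (half_pos hx)) ?_ ?_ ?_ ?_ ?_ ?_
  · have h2 : (fun y => ∫ t in Ioi (0:ℝ), Real.exp (-y * Real.cosh t) * Real.cosh (ν * t))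
        = besselK ν := by
      funext y; rfl
    have h3 : (∫ t in Ioi (0:ℝ), Real.exp (-x * Real.cosh t) * -Real.cosh t * Real.cosh (ν * t))
        = -∫ t in Ioi (0:ℝ), Real.exp (-x * Real.cosh t) * (Real.cosh t * Real.cosh (ν * t)) := by
      rw [← integral_neg]
      congr 1; funext t; ring
    rw [h2, h3] at key
    exact key.2
  · filter_upwards with y
    exact Continuous.aestronglyMeasurable (by fun_prop)
  · exact intK ν hx
  · exact Continuous.aestronglyMeasurable (by fun_prop)
  · filter_upwards [ae_restrict_mem measurableSet_Ioi] with t ht y hy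
    have hy2 : x / 2 < y := by
      have := abs_lt.1 (mem_ball_iff_norm.1 hy); linarith [this.1]
    have hexp : Real.exp (-y * Real.cosh t) ≤ Real.exp (-(x/2) * Real.cosh t) :=
      Real.exp_le_exp.2 (by nlinarith [Real.cosh_pos t])
    calc ‖Real.exp (-y * Real.cosh t) * -Real.cosh t * Real.cosh (ν * t)‖
        = Real.exp (-y * Real.cosh t) * (Real.cosh t * Real.cosh (ν * t)) := by
          rw [norm_eq_abs, abs_mul, abs_mul, abs_neg, abs_of_pos (Real.exp_pos _),
            abs_of_pos (Real.cosh_pos _), abs_of_pos (Real.cosh_pos _), mul_assoc]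
    _ ≤ _ := mul_le_mul_of_nonneg_right hexp
          (mul_pos (Real.cosh_pos _) (Real.cosh_pos _)).le
  · exact intK1 ν (half_pos hx)
  · filter_upwards with t y _
    have h1 : HasDerivAt (fun y : ℝ => -y * Real.cosh t) (-Real.cosh t) y := by
      simpa using (hasDerivAt_id y).neg.mul_const (Real.cosh t)
    exact (h1.exp.mul_const (Real.cosh (ν * t)))


lemma tendsto_aux {x c : ℝ} (hx : 0 < x) {f : ℝ → ℝ}
    (hf : ∀ t, 0 ≤ t → ‖f t‖ ≤ Real.exp (c * t) * Real.exp (-x * Real.cosh t)) :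
    Tendsto f atTop (nhds 0) := by
  have h1 : ∀ᶠ t in atTop, ‖f t‖ ≤ Real.exp (2 * (c + 1) ^ 2 / x) * Real.exp (-t) := by
    filter_upwards [eventually_ge_atTop (0:ℝ)] with t ht
    exact (hf t ht).trans (key_bound hx ht)
  have h2 : Tendsto (fun t : ℝ => Real.exp (2 * (c + 1) ^ 2 / x) * Real.exp (-t)) atTop (nhds 0) := by
    have := Real.tendsto_exp_neg_atTop_nhds_zero.const_mul (Real.exp (2 * (c + 1) ^ 2 / x))
    simpa using this
  exact squeeze_zero_norm' h1 h2

/-- FTC identity: `∫ e^{-x cosh t} (ν cosh νt - x sinh t sinh νt) dt = 0`. -/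
lemma id1 (ν : ℝ) {x : ℝ} (hx : 0 < x) :
    ν * (∫ t in Ioi (0:ℝ), Real.exp (-x * Real.cosh t) * Real.cosh (ν * t))
      = x * ∫ t in Ioi (0:ℝ), Real.exp (-x * Real.cosh t) * (Real.sinh t * Real.sinh (ν * t)) := by
  set A : ℝ → ℝ := fun t => Real.exp (-x * Real.cosh t) * (-x * Real.sinh t) * Real.sinh (ν * t)
    with hA
  set B : ℝ → ℝ := fun t => Real.exp (-x * Real.cosh t) * (Real.cosh (ν * t) * ν) with hB
  have hderiv : ∀ t : ℝ, HasDerivAt (fun t => Real.exp (-x * Real.cosh t) * Real.sinh (ν * t))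
      (A t + B t) t := by
    intro t
    have h1 : HasDerivAt (fun t : ℝ => -x * Real.cosh t) (-x * Real.sinh t) t :=
      (Real.hasDerivAt_cosh t).const_mul (-x)
    have h3 : HasDerivAt (fun t : ℝ => Real.sinh (ν * t)) (Real.cosh (ν * t) * ν) t := by
      have : HasDerivAt (fun t : ℝ => ν * t) ν t := by
        simpa using (hasDerivAt_id t).const_mul ν
      exact this.sinh
    exact h1.exp.mul h3
  have hintA : IntegrableOn A (Ioi (0:ℝ)) := by
    apply (((intSS ν hx).const_mul (-x)).congr (Filter.Eventually.of_forall fun t => ?_))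
    simp only [hA]; ring
  have hintB : IntegrableOn B (Ioi (0:ℝ)) := by
    apply (((intK ν hx).const_mul ν).congr (Filter.Eventually.of_forall fun t => ?_))
    simp only [hB]; ring
  have hlim : Tendsto (fun t => Real.exp (-x * Real.cosh t) * Real.sinh (ν * t)) atTop
      (nhds 0) := by
    apply tendsto_aux (c := |ν|) hx
    intro t ht
    rw [norm_eq_abs, abs_mul, abs_of_pos (Real.exp_pos _), mul_comm]
    apply mul_le_mul_of_nonneg_right _ (Real.exp_pos _).le
    calc |Real.sinh (ν * t)| ≤ Real.exp |ν * t| := abs_sinh_le_exp_abs _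
    _ = Real.exp (|ν| * t) := by rw [abs_mul_self_nonneg ν t ht]
  have hftc := integral_Ioi_of_hasDerivAt_of_tendsto (a := (0:ℝ))
    ((hderiv 0).continuousAt.continuousWithinAt) (fun t _ => hderiv t) (hintA.add hintB) hlim
  simp only [Real.cosh_zero, mul_zero, Real.sinh_zero, zero_sub, neg_zero, mul_one] at hftc
  rw [integral_add hintA hintB] at hftc
  have hA' : ∫ t in Ioi (0:ℝ), A t
      = -x * ∫ t in Ioi (0:ℝ), Real.exp (-x * Real.cosh t) * (Real.sinh t * Real.sinh (ν * t)) := by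
    rw [← integral_const_mul]
    apply setIntegral_congr_fun measurableSet_Ioi fun t _ => ?_
    simp only [hA]; ring
  have hB' : ∫ t in Ioi (0:ℝ), B t
      = ν * ∫ t in Ioi (0:ℝ), Real.exp (-x * Real.cosh t) * Real.cosh (ν * t) := by
    rw [← integral_const_mul]
    apply setIntegral_congr_fun measurableSet_Ioi fun t _ => ?_
    simp only [hB]; ring
  rw [hA', hB'] at hftc
  linarith

/-- FTC identity: `∫ x sinh t e^{-x cosh t} dt = e^{-x}`. -/
lemma id2 {x : ℝ} (hx : 0 < x) :
    x * (∫ t in Ioi (0:ℝ), Real.exp (-x * Real.cosh t) * Real.sinh t) = Real.exp (-x) := by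
  have hderiv : ∀ t : ℝ, HasDerivAt (fun t => -Real.exp (-x * Real.cosh t))
      (-(Real.exp (-x * Real.cosh t) * (-x * Real.sinh t))) t := by
    intro t
    exact (((Real.hasDerivAt_cosh t).const_mul (-x)).exp).neg
  have hint : IntegrableOn (fun t => -(Real.exp (-x * Real.cosh t) * (-x * Real.sinh t)))
      (Ioi (0:ℝ)) := by
    apply ((intS hx).const_mul x).congr (Filter.Eventually.of_forall fun t => ?_)
    ring
  have hlim : Tendsto (fun t => -Real.exp (-x * Real.cosh t)) atTop (nhds 0) := by
    apply tendsto_aux (c := 0) hx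
    intro t _
    rw [norm_neg, norm_eq_abs, abs_of_pos (Real.exp_pos _)]
    simp
  have hftc := integral_Ioi_of_hasDerivAt_of_tendsto (a := (0:ℝ))
    ((hderiv 0).continuousAt.continuousWithinAt) (fun t _ => hderiv t) hint hlim
  simp only [Real.cosh_zero, mul_one, zero_sub, neg_neg] at hftc
  have h2 : ∫ t in Ioi (0:ℝ), -(Real.exp (-x * Real.cosh t) * (-x * Real.sinh t))
      = x * ∫ t in Ioi (0:ℝ), Real.exp (-x * Real.cosh t) * Real.sinh t := by
    rw [← integral_const_mul]
    apply setIntegral_congr_fun measurableSet_Ioi fun t _ => ?_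
    ring
  rw [h2] at hftc
  exact hftc


lemma besselK_nonneg (ν x : ℝ) : 0 ≤ besselK ν x :=
  setIntegral_nonneg measurableSet_Ioi fun t _ =>
    (mul_pos (Real.exp_pos _) (Real.cosh_pos _)).le

lemma besselK_mono {μ ν : ℝ} (h : |μ| ≤ |ν|) {x : ℝ} (hx : 0 < x) :
    besselK μ x ≤ besselK ν x := by
  apply setIntegral_mono_on (intK μ hx) (intK ν hx) measurableSet_Ioi
  intro t ht
  apply mul_le_mul_of_nonneg_left _ (Real.exp_pos _).le
  apply Real.cosh_le_cosh.2
  rw [abs_mul, abs_mul]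
  exact mul_le_mul_of_nonneg_right h (abs_nonneg t)

/-- Key identity: `x K_ν'(x) + ν K_ν(x) = -x K_{ν-1}(x)`. -/
lemma key_identity (ν : ℝ) {x : ℝ} (hx : 0 < x) :
    x * deriv (besselK ν) x + ν * besselK ν x = -(x * besselK (ν - 1) x) := by
  rw [(besselK_hasDerivAt ν hx).deriv]
  have hsub : besselK (ν - 1) x
      = (∫ t in Ioi (0:ℝ), Real.exp (-x * Real.cosh t) * (Real.cosh t * Real.cosh (ν * t)))
        - ∫ t in Ioi (0:ℝ), Real.exp (-x * Real.cosh t) * (Real.sinh t * Real.sinh (ν * t)) := by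
    rw [← integral_sub (intK1 ν hx) (intSS ν hx), besselK]
    apply setIntegral_congr_fun measurableSet_Ioi fun t _ => ?_
    rw [show (ν - 1) * t = ν * t - t by ring, Real.cosh_sub]
    ring
  have hid := id1 ν hx
  rw [hsub]
  have hK : besselK ν x = ∫ t in Ioi (0:ℝ), Real.exp (-x * Real.cosh t) * Real.cosh (ν * t) := rfl
  rw [hK]
  linarith


lemma sinh_add_one_bounds {t : ℝ} (ht : 0 ≤ t) :
    Real.cosh t ≤ Real.sinh t + 1 ∧ Real.sinh t + 1 ≤ Real.exp t := by
  have h1 := Real.cosh_sub_sinh t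
  have h2 : Real.exp (-t) ≤ 1 := Real.exp_le_one_iff.2 (by linarith)
  have h3 : Real.sinh t ≤ Real.cosh t := (Real.sinh_lt_cosh t).le
  have h4 : Real.cosh t ≤ Real.exp t := by
    have := cosh_le_exp_abs t; rwa [abs_of_nonneg ht] at this
  have h5 : 0 ≤ Real.sinh t := Real.sinh_nonneg_iff.2 ht
  have h6 : 1 ≤ Real.cosh t := Real.one_le_cosh t
  have h7 : Real.cosh t = (Real.exp t + Real.exp (-t)) / 2 := Real.cosh_eq t
  exact ⟨by linarith, by linarith⟩

lemma xK1_le {x : ℝ} (hx : 0 < x) : x * besselK 1 x ≤ 1 + x * besselK 0 x := by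
  have hintP : IntegrableOn (fun t => Real.exp (-x * Real.cosh t) * (Real.sinh t + 1))
      (Ioi (0:ℝ)) := by
    refine integrableOn_aux (c := 1) hx (by fun_prop) fun t ht => ?_
    have hb := sinh_add_one_bounds ht
    have hs : 0 ≤ Real.sinh t := Real.sinh_nonneg_iff.2 ht
    rw [abs_of_nonneg (by linarith), one_mul]
    exact hb.2
  have h1 : besselK 1 x ≤ ∫ t in Ioi (0:ℝ), Real.exp (-x * Real.cosh t) * (Real.sinh t + 1) := by
    apply setIntegral_mono_on (intK 1 hx) hintP measurableSet_Ioi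
    intro t ht
    rw [one_mul]
    exact mul_le_mul_of_nonneg_left (sinh_add_one_bounds (le_of_lt ht)).1 (Real.exp_pos _).le
  have h2 : ∫ t in Ioi (0:ℝ), Real.exp (-x * Real.cosh t) * (Real.sinh t + 1)
      = (∫ t in Ioi (0:ℝ), Real.exp (-x * Real.cosh t) * Real.sinh t) + besselK 0 x := by
    have hK0 : besselK 0 x = ∫ t in Ioi (0:ℝ), Real.exp (-x * Real.cosh t) * Real.cosh (0 * t) :=
      rfl
    rw [hK0, ← integral_add (intS hx) (intK 0 hx)]
    apply setIntegral_congr_fun measurableSet_Ioi fun t _ => ?_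
    rw [zero_mul, Real.cosh_zero]
    ring
  calc x * besselK 1 x
      ≤ x * ((∫ t in Ioi (0:ℝ), Real.exp (-x * Real.cosh t) * Real.sinh t) + besselK 0 x) := by
        rw [← h2]; exact mul_le_mul_of_nonneg_left h1 hx.le
  _ = x * (∫ t in Ioi (0:ℝ), Real.exp (-x * Real.cosh t) * Real.sinh t) + x * besselK 0 x := by
        ring
  _ = Real.exp (-x) + x * besselK 0 x := by rw [id2 hx]
  _ ≤ 1 + x * besselK 0 x := by
        have : Real.exp (-x) ≤ 1 := Real.exp_le_one_iff.2 (by linarith)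
        linarith

lemma besselK_zero_lb {x : ℝ} (hx : 0 < x) (hx1 : x < 1) :
    Real.exp (-1) * (-Real.log x) ≤ besselK 0 x := by
  set L := -Real.log x with hLdef
  have hL0 : 0 < L := by
    have := Real.log_neg hx hx1
    simp only [hLdef]; linarith
  have hstep : ∀ t ∈ Ioc (0:ℝ) L, Real.exp (-1) ≤ Real.exp (-x * Real.cosh t) * Real.cosh (0 * t) := by
    intro t ht
    rw [zero_mul, Real.cosh_zero, mul_one]
    apply Real.exp_le_exp.2
    have hc : Real.cosh t ≤ Real.exp t := by
      have := cosh_le_exp_abs t; rwa [abs_of_nonneg ht.1.le] at this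
    have he : Real.exp t ≤ Real.exp L := Real.exp_le_exp.2 ht.2
    have hL : Real.exp L = x⁻¹ := by
      rw [hLdef, Real.exp_neg, Real.exp_log hx]
    have : x * Real.cosh t ≤ 1 := by
      calc x * Real.cosh t ≤ x * x⁻¹ := by
            apply mul_le_mul_of_nonneg_left _ hx.le
            rw [← hL]; exact hc.trans he
      _ = 1 := mul_inv_cancel₀ hx.ne'
    linarith
  have h1 : ∫ t in Ioc (0:ℝ) L, (Real.exp (-1) : ℝ)
      ≤ ∫ t in Ioc (0:ℝ) L, Real.exp (-x * Real.cosh t) * Real.cosh (0 * t) := by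
    apply setIntegral_mono_on (integrableOn_const measure_Ioc_lt_top.ne)
      ((intK 0 hx).mono_set Ioc_subset_Ioi_self) measurableSet_Ioc hstep
  have h2 : ∫ t in Ioc (0:ℝ) L, (Real.exp (-1) : ℝ) = Real.exp (-1) * L := by
    rw [setIntegral_const, Real.volume_real_Ioc_of_le (by linarith), smul_eq_mul]
    ring
  have h3 : ∫ t in Ioc (0:ℝ) L, Real.exp (-x * Real.cosh t) * Real.cosh (0 * t)
      ≤ besselK 0 x := by
    apply setIntegral_mono_set (intK 0 hx)
    · filter_upwards with t
      exact (mul_pos (Real.exp_pos _) (Real.cosh_pos _)).le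
    · filter_upwards with t ht
      exact Ioc_subset_Ioi_self ht
  rw [h2] at h1
  exact h1.trans h3


lemma main {a : ℝ} (ha : 0 ≤ a) :
    Tendsto (fun x : ℝ => x * deriv (besselK a) x / besselK a x)
      (nhdsWithin 0 (Ioi 0)) (nhds (-a)) := by
  set E : ℝ → ℝ := fun x => x * besselK (a - 1) x / besselK a x with hE
  have hmem : Ioo (0:ℝ) 1 ∈ nhdsWithin (0:ℝ) (Ioi 0) :=
    Ioo_mem_nhdsGT_of_mem (by norm_num)
  have hfacts : ∀ x ∈ Ioo (0:ℝ) 1,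
      0 < besselK a x ∧ 0 ≤ E x ∧ E x ≤ 2 * x + Real.exp 1 / (-Real.log x) := by
    intro x hx
    obtain ⟨hx0, hx1⟩ := hx
    have hlog : 0 < -Real.log x := by linarith [Real.log_neg hx0 hx1]
    have hK0 : Real.exp (-1) * (-Real.log x) ≤ besselK 0 x := besselK_zero_lb hx0 hx1
    have h0a : besselK 0 x ≤ besselK a x := besselK_mono (by simp) hx0
    have hKa : 0 < besselK a x := lt_of_lt_of_le (by positivity) (hK0.trans h0a)
    refine ⟨hKa, div_nonneg (mul_nonneg hx0.le (besselK_nonneg _ _)) hKa.le, ?_⟩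
    have hm : besselK (a - 1) x ≤ besselK a x + besselK 1 x := by
      rcases le_total a 1 with h | h
      · have h2 : besselK (a - 1) x ≤ besselK 1 x :=
          besselK_mono (by rw [abs_of_nonpos (by linarith), abs_one]; linarith) hx0
        linarith [besselK_nonneg a x]
      · have h2 : besselK (a - 1) x ≤ besselK a x :=
          besselK_mono (by rw [abs_of_nonneg (by linarith : (0:ℝ) ≤ a - 1),
            abs_of_nonneg ha]; linarith) hx0
        linarith [besselK_nonneg 1 x]
    have hxk1 : x * besselK 1 x ≤ 1 + x * besselK 0 x := xK1_le hx0
    have hnum : x * besselK (a - 1) x ≤ 2 * x * besselK a x + 1 := by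
      nlinarith [mul_le_mul_of_nonneg_left hm hx0.le,
        mul_le_mul_of_nonneg_left h0a hx0.le]
    have h1Ka : 1 / besselK a x ≤ Real.exp 1 / (-Real.log x) := by
      rw [div_le_div_iff₀ hKa hlog]
      have hexp : Real.exp 1 * (Real.exp (-1) * (-Real.log x)) = -Real.log x := by
        rw [← mul_assoc, ← Real.exp_add]; norm_num
      nlinarith [mul_le_mul_of_nonneg_left (hK0.trans h0a) (Real.exp_pos 1).le]
    calc E x = x * besselK (a - 1) x / besselK a x := rfl
    _ ≤ (2 * x * besselK a x + 1) / besselK a x := by gcongr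
    _ = 2 * x + 1 / besselK a x := by field_simp
    _ ≤ 2 * x + Real.exp 1 / (-Real.log x) := by linarith
  have hEtend : Tendsto E (nhdsWithin 0 (Ioi 0)) (nhds 0) := by
    have hupper : Tendsto (fun x : ℝ => 2 * x + Real.exp 1 / (-Real.log x))
        (nhdsWithin 0 (Ioi 0)) (nhds 0) := by
      have h1 : Tendsto (fun x : ℝ => 2 * x) (nhdsWithin 0 (Ioi 0)) (nhds 0) := by
        have h := (((continuous_const.mul continuous_id).tendsto (0:ℝ)).mono_left
          (nhdsWithin_le_nhds (s := Ioi (0:ℝ))) :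
          Tendsto (fun x : ℝ => 2 * x) (nhdsWithin 0 (Ioi 0)) (nhds (2 * 0)))
        have h' : Tendsto (fun x : ℝ => 2 * x) (nhdsWithin 0 (Ioi 0)) (nhds (2 * 0)) := h
        rw [mul_zero] at h'; exact h'
      have hlog : Tendsto (fun x : ℝ => -Real.log x) (nhdsWithin 0 (Ioi 0)) atTop :=
        tendsto_neg_atBot_atTop.comp Real.tendsto_log_nhdsGT_zero
      have hinv : Tendsto (fun x : ℝ => (-Real.log x)⁻¹) (nhdsWithin 0 (Ioi 0)) (nhds 0) :=
        tendsto_inv_atTop_zero.comp hlog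
      have h2 : Tendsto (fun x : ℝ => Real.exp 1 / (-Real.log x))
          (nhdsWithin 0 (Ioi 0)) (nhds 0) := by
        have := hinv.const_mul (Real.exp 1)
        simpa [div_eq_mul_inv] using this
      simpa using h1.add h2
    apply tendsto_of_tendsto_of_tendsto_of_le_of_le' tendsto_const_nhds hupper
    · filter_upwards [hmem] with x hx; exact (hfacts x hx).2.1
    · filter_upwards [hmem] with x hx; exact (hfacts x hx).2.2
  have heq : (fun x : ℝ => x * deriv (besselK a) x / besselK a x)
      =ᶠ[nhdsWithin 0 (Ioi 0)] fun x => -E x - a := by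
    filter_upwards [hmem] with x hx
    have hKa := (hfacts x hx).1
    have hid := key_identity a hx.1
    have hx' : x * deriv (besselK a) x = -(x * besselK (a - 1) x) - a * besselK a x := by
      linarith
    rw [hx']
    simp only [hE]
    field_simp
  have hfin : Tendsto (fun x : ℝ => -E x - a) (nhdsWithin 0 (Ioi 0)) (nhds (-a)) := by
    have := (hEtend.neg).sub_const a
    simpa using this
  exact hfin.congr' heq.symm

end BesselKAux

theorem besselK_logDeriv_tendsto_zero (ν : ℝ) :
    Filter.Tendsto (fun x : ℝ => x * deriv (besselK ν) x / besselK ν x)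
      (nhdsWithin 0 (Set.Ioi 0)) (nhds (-|ν|)) := by
  have habs : besselK ν = besselK |ν| := by
    funext x
    unfold besselK
    congr 1
    funext t
    rw [← Real.cosh_abs (ν * t), ← Real.cosh_abs (|ν| * t), abs_mul, abs_mul, abs_abs]
  rw [habs]
  exact BesselKAux.main (abs_nonneg ν)
end
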